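/- arXiv:1705.00765 — 4 statements merged into one kernel-verified Lean document; each statement's English description precedes it below -/
import Mathlib

section
/- Let n ≥ 1 and let f : (0,∞) × ℝⁿ → ℝ be a smooth positive solution of the heat equation ∂f/∂t = Δf that is ℤⁿ-periodic in the space variable. Let v = −ln f − (n/2)ln(4πt) and P = 2Δv − |∇v|² − 2n/t. Then P(t,x) ≤ 0 for all t > 0 and all x ∈ ℝⁿ. -/
open MeasureTheory Real

noncomputable section

/-- Partial derivative of `g` at `x` in the `i`-th coordinate direction. -/
def pd {n : ℕ} (i : Fin n) (g : (Fin n → ℝ) → ℝ) (x : Fin n → ℝ) : ℝ :=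
  fderiv ℝ g x (Pi.single i 1)

/-- Squared Euclidean norm of the (spatial) gradient of `g` at `x`. -/
def gradSq {n : ℕ} (g : (Fin n → ℝ) → ℝ) (x : Fin n → ℝ) : ℝ :=
  ∑ i, (pd i g x) ^ 2

/-- The (spatial) Laplacian of `g` at `x`. -/
def lap {n : ℕ} (g : (Fin n → ℝ) → ℝ) (x : Fin n → ℝ) : ℝ :=
  ∑ i, pd i (pd i g) x

/-- The `(i,j)` entry of the Hessian of `g` at `x`. -/
def hess {n : ℕ} (i j : Fin n) (g : (Fin n → ℝ) → ℝ) (x : Fin n → ℝ) : ℝ :=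
  pd i (pd j g) x


noncomputable section
variable {E : Type*} [NormedAddCommGroup E] [NormedSpace ℝ E]

/-- directional derivative -/
def Dv (v : E) (F : E → ℝ) (p : E) : ℝ := fderiv ℝ F p v

variable {D : Set E}

theorem diffAt_of_smoothOn {G : Type*} [NormedAddCommGroup G] [NormedSpace ℝ G]
    (hD : IsOpen D) {F : E → G} (hF : ContDiffOn ℝ (⊤:ℕ∞) F D) {p : E} (hp : p ∈ D) :
    DifferentiableAt ℝ F p :=
  ((hF p hp).contDiffAt (hD.mem_nhds hp)).differentiableAt (by simp)

theorem Dv_smoothOn (hD : IsOpen D) {F : E → ℝ} (hF : ContDiffOn ℝ (⊤:ℕ∞) F D) (v : E) :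
    ContDiffOn ℝ (⊤:ℕ∞) (Dv v F) D := by
  have h1 : ContDiffOn ℝ (⊤:ℕ∞) (fderiv ℝ F) D := hF.fderiv_of_isOpen hD (by simp)
  exact (ContinuousLinearMap.apply ℝ ℝ v).contDiff.comp_contDiffOn h1

theorem Dv_eq_snd_fderiv (hD : IsOpen D) {F : E → ℝ} (hF : ContDiffOn ℝ (⊤:ℕ∞) F D)
    {p : E} (hp : p ∈ D) (u w : E) :
    Dv u (Dv w F) p = fderiv ℝ (fderiv ℝ F) p u w := by
  have hder : DifferentiableAt ℝ (fderiv ℝ F) p :=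
    diffAt_of_smoothOn hD (hF.fderiv_of_isOpen hD (by simp)) hp
  have : (fun q => fderiv ℝ F q w) = fun q => (ContinuousLinearMap.apply ℝ ℝ w) (fderiv ℝ F q) := rfl
  change (fderiv ℝ (fun q => fderiv ℝ F q w) p) u = _
  rw [this, show (fun q => (ContinuousLinearMap.apply ℝ ℝ w) (fderiv ℝ F q))
      = (ContinuousLinearMap.apply ℝ ℝ w) ∘ (fderiv ℝ F) from rfl,
    fderiv_comp p (ContinuousLinearMap.apply ℝ ℝ w).differentiableAt hder]
  simp

theorem Dv_comm (hD : IsOpen D) {F : E → ℝ} (hF : ContDiffOn ℝ (⊤:ℕ∞) F D)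
    {p : E} (hp : p ∈ D) (a b : E) :
    Dv a (Dv b F) p = Dv b (Dv a F) p := by
  have hsym : IsSymmSndFDerivAt ℝ F p :=
    ((hF p hp).contDiffAt (hD.mem_nhds hp)).isSymmSndFDerivAt (by simp only [minSmoothness_of_isRCLikeNormedField]; rw [← WithTop.coe_ofNat]; exact WithTop.coe_le_coe.2 le_top)
  rw [Dv_eq_snd_fderiv hD hF hp, Dv_eq_snd_fderiv hD hF hp, hsym.eq]

section rules
variable {F G : E → ℝ} {p v : E}

theorem Dv_congr (hD : IsOpen D) (h : Set.EqOn F G D) (hp : p ∈ D) :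
    Dv v F p = Dv v G p := by
  have : F =ᶠ[nhds p] G := Filter.eventuallyEq_of_mem (hD.mem_nhds hp) h
  simp only [Dv, this.fderiv_eq]

theorem Dv_add (hF : DifferentiableAt ℝ F p) (hG : DifferentiableAt ℝ G p) :
    Dv v (fun q => F q + G q) p = Dv v F p + Dv v G p := by
  simp [Dv, fderiv_fun_add hF hG]

theorem Dv_sub (hF : DifferentiableAt ℝ F p) (hG : DifferentiableAt ℝ G p) :
    Dv v (fun q => F q - G q) p = Dv v F p - Dv v G p := by
  simp [Dv, fderiv_fun_sub hF hG]

theorem Dv_mul (hF : DifferentiableAt ℝ F p) (hG : DifferentiableAt ℝ G p) :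
    Dv v (fun q => F q * G q) p = Dv v F p * G p + F p * Dv v G p := by
  simp [Dv, fderiv_fun_mul hF hG]; ring

theorem Dv_const_mul (hF : DifferentiableAt ℝ F p) (c : ℝ) :
    Dv v (fun q => c * F q) p = c * Dv v F p := by
  simp [Dv, fderiv_const_mul hF c]

theorem Dv_const (c : ℝ) : Dv v (fun _ => c) p = 0 := by simp [Dv]

theorem Dv_sq (hF : DifferentiableAt ℝ F p) :
    Dv v (fun q => (F q)^2) p = 2 * F p * Dv v F p := by
  have := Dv_mul (v := v) hF hF
  have h2 : (fun q => (F q)^2) = fun q => F q * F q := by funext q; ring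
  rw [h2, this]; ring

theorem Dv_sum {ι : Type*} (s : Finset ι) {H : ι → E → ℝ}
    (hH : ∀ i ∈ s, DifferentiableAt ℝ (H i) p) :
    Dv v (fun q => ∑ i ∈ s, H i q) p = ∑ i ∈ s, Dv v (H i) p := by
  simp [Dv, fderiv_fun_sum hH]

theorem Dv_log (hF : DifferentiableAt ℝ F p) (hFp : F p ≠ 0) :
    Dv v (fun q => Real.log (F q)) p = Dv v F p / F p := by
  simp only [Dv]
  rw [(hF.hasFDerivAt.log hFp).fderiv]
  simp [div_eq_inv_mul]

end rules

section bridge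
variable {X : Type*} [NormedAddCommGroup X] [NormedSpace ℝ X]
variable {g : ℝ × X → ℝ}

theorem slice_spatial (hg : DifferentiableAt ℝ g (t, x)) (h : X) :
    fderiv ℝ (fun y => g (t, y)) x h = Dv ((0:ℝ), h) g (t, x) := by
  have hc : HasFDerivAt (fun y : X => (t, y)) (ContinuousLinearMap.inr ℝ ℝ X) x :=
    hasFDerivAt_prodMk_right t x
  have := (hg.hasFDerivAt.comp x hc).fderiv
  rw [show (fun y => g (t, y)) = g ∘ (fun y : X => (t, y)) from rfl, this]
  rfl

theorem slice_time (hg : DifferentiableAt ℝ g (t, x)) :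
    deriv (fun s => g (s, x)) t = Dv ((1:ℝ), (0:X)) g (t, x) := by
  have hc : HasFDerivAt (fun s : ℝ => (s, x)) (ContinuousLinearMap.inl ℝ ℝ X) t :=
    hasFDerivAt_prodMk_left t x
  have hd : HasDerivAt (fun s => g (s, x)) (fderiv ℝ g (t, x) ((1:ℝ), (0:X))) t := by
    have := (hg.hasFDerivAt.comp t hc).hasDerivAt
    simpa [Function.comp_def] using this
  exact hd.deriv
end bridge

section aux

theorem deriv_nonneg_of_left_max {θ : ℝ → ℝ} {a σ c : ℝ} (hσ : σ < a)
    (hd : HasDerivAt θ c a) (hmax : ∀ s ∈ Set.Icc σ a, θ s ≤ θ a) : 0 ≤ c := by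
  have hslope : Filter.Tendsto (slope θ a) (nhdsWithin a (Set.Iio a)) (nhds c) :=
    (hasDerivAt_iff_tendsto_slope.mp hd).mono_left
      (nhdsWithin_mono a (fun s hs => Set.mem_compl_singleton_iff.mpr (ne_of_lt hs)))
  refine ge_of_tendsto hslope ?_
  filter_upwards [Filter.inter_mem self_mem_nhdsWithin
    (nhdsWithin_le_nhds (Ioo_mem_nhds hσ (lt_add_one a)))] with s hs
  obtain ⟨hs1, hs2⟩ := hs
  have h1 : θ s ≤ θ a := hmax s ⟨le_of_lt hs2.1, le_of_lt hs1⟩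
  have h2 : s - a < 0 := by simp [Set.mem_Iio] at hs1; linarith
  rw [slope_def_field]
  exact div_nonneg_iff.mpr (Or.inr ⟨by linarith, by linarith⟩)

theorem secondDeriv_nonpos_of_isLocalMax {φ ψ : ℝ → ℝ} {c : ℝ}
    (hmax : IsLocalMax φ 0) (hd : ∀ s, HasDerivAt φ (ψ s) s)
    (hψ : HasDerivAt ψ c 0) : c ≤ 0 := by
  by_contra hc
  push_neg at hc
  have hψ0 : ψ 0 = 0 := by
    have := hmax.deriv_eq_zero
    rwa [(hd 0).deriv] at this
  -- eventually ψ s > 0 for s > 0 near 0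
  have hslope : Filter.Tendsto (slope ψ 0) (nhdsWithin 0 (Set.Ioi 0)) (nhds c) :=
    (hasDerivAt_iff_tendsto_slope.mp hψ).mono_left
      (nhdsWithin_mono 0 (fun s hs => Set.mem_compl_singleton_iff.mpr (ne_of_gt hs)))
  have hev : ∀ᶠ s in nhdsWithin 0 (Set.Ioi 0), 0 < ψ s := by
    filter_upwards [hslope.eventually (eventually_gt_nhds hc), self_mem_nhdsWithin]
      with s hs1 hs2
    rw [slope_def_field, hψ0, sub_zero, sub_zero] at hs1
    have hs0 : (0:ℝ) < s := hs2
    rcases div_pos_iff.mp hs1 with h | h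
    · exact h.1
    · linarith [h.2]
  have hev2 : ∀ᶠ s in nhdsWithin 0 (Set.Ioi 0), φ s ≤ φ 0 :=
    (hmax.filter_mono (nhdsWithin_le_nhds))
  obtain ⟨u, hu, hsub⟩ := (mem_nhdsGT_iff_exists_Ioc_subset).mp (hev.and hev2)
  have hu0 : (0:ℝ) < u := hu
  have hmono : StrictMonoOn φ (Set.Icc 0 u) := by
    apply strictMonoOn_of_deriv_pos (convex_Icc 0 u)
    · exact Continuous.continuousOn (by
        have : Differentiable ℝ φ := fun s => (hd s).differentiableAt
        exact this.continuous)
    · intro x hx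
      rw [interior_Icc] at hx
      rw [(hd x).deriv]
      exact (hsub ⟨hx.1, le_of_lt hx.2⟩).1
  have h5 := hmono (Set.left_mem_Icc.mpr (le_of_lt hu0)) (Set.right_mem_Icc.mpr (le_of_lt hu0)) hu0
  have hle := (hsub ⟨hu0, le_refl u⟩).2
  linarith

end aux

section lines
variable {X : Type*} [NormedAddCommGroup X] [NormedSpace ℝ X]
variable {F : ℝ × X → ℝ} {t s0 : ℝ} {xb h : X}

theorem line_spatial (hF : DifferentiableAt ℝ F (t, xb + s0 • h)) :
    HasDerivAt (fun s => F (t, xb + s • h)) (Dv ((0:ℝ), h) F (t, xb + s0 • h)) s0 := by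
  have hγ : HasDerivAt (fun s : ℝ => ((t, xb + s • h) : ℝ × X)) ((0:ℝ), h) s0 := by
    have := (hasDerivAt_const s0 t).prodMk (((hasDerivAt_id s0).smul_const h).const_add xb)
    simpa using this
  simpa [Dv, Function.comp_def] using hF.hasFDerivAt.comp_hasDerivAt s0 hγ

theorem line_time (hF : DifferentiableAt ℝ F (s0, xb)) :
    HasDerivAt (fun s => F (s, xb)) (Dv ((1:ℝ), (0:X)) F (s0, xb)) s0 := by
  have hγ : HasDerivAt (fun s : ℝ => ((s, xb) : ℝ × X)) ((1:ℝ), (0:X)) s0 :=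
    (hasDerivAt_id s0).prodMk (hasDerivAt_const s0 xb)
  simpa [Dv, Function.comp_def] using hF.hasFDerivAt.comp_hasDerivAt s0 hγ

end lines

section periodic
variable {E : Type*} [NormedAddCommGroup E] [NormedSpace ℝ E]
variable {D : Set E} {F : E → ℝ} {c : E}

theorem Dv_per (hD : IsOpen D) (hF : ContDiffOn ℝ (⊤:ℕ∞) F D)
    (hc : ∀ p ∈ D, p + c ∈ D) (hper : ∀ p ∈ D, F (p + c) = F p) (v : E) :
    ∀ p ∈ D, Dv v F (p + c) = Dv v F p := by
  intro p hp
  have hFd : DifferentiableAt ℝ F (p + c) := diffAt_of_smoothOn hD hF (hc p hp)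
  have hγ : HasFDerivAt (fun q : E => q + c) (ContinuousLinearMap.id ℝ E) p := by
    simpa using (hasFDerivAt_id p).add_const c
  have hcomp : HasFDerivAt (fun q => F (q + c)) (fderiv ℝ F (p + c)) p := by
    simpa [Function.comp_def] using hFd.hasFDerivAt.comp p hγ
  have heq : (fun q => F (q + c)) =ᶠ[nhds p] F :=
    Filter.eventuallyEq_of_mem (hD.mem_nhds hp) (fun q hq => hper q hq)
  have : fderiv ℝ F p = fderiv ℝ F (p + c) := by
    rw [← hcomp.fderiv]
    exact (heq.fderiv_eq).symm
  simp [Dv, this]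
end periodic


variable {N : ℕ}

theorem sum_split (u v : Fin N → ℝ) :
    ∑ j, (u j + v j) = ∑ j, u j + ∑ j, v j := Finset.sum_add_distrib

theorem pull (r : ℝ) (u : Fin N → ℝ) : ∑ j, r * u j = r * ∑ j, u j :=
  (Finset.mul_sum _ _ _).symm

theorem algebra_key (a d e : Fin N → ℝ) (b c : Fin N → Fin N → ℝ)
    (hd : ∀ i, d i = ∑ k, c k i) :
    (-2) * (∑ i, a i * (d i + 2 * ∑ j, a j * b i j))
      + (-2) * (∑ j, (e j + 2 * (∑ i, (b j i * b j i + a i * c j i))))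
    = (∑ j, ((-2) * (∑ i, (b j i * b j i + a i * c j i)) + (-2) * e j))
      + 2 * ∑ j, a j * ((-2) * (∑ i, a i * b j i) + (-2) * d j)
      - 2 * ∑ j, ∑ i, b j i * b j i := by
  have key : ∑ i, a i * d i = ∑ j, ∑ i, a i * c j i := by
    calc ∑ i, a i * d i = ∑ i, ∑ k, a i * c k i :=
          Finset.sum_congr rfl (fun i _ => by rw [hd i, Finset.mul_sum])
      _ = ∑ j, ∑ i, a i * c j i := Finset.sum_comm
  have T1 : ∑ i, a i * (d i + 2 * ∑ j, a j * b i j)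
      = (∑ i, a i * d i) + 2 * ∑ i, ∑ j, a i * (a j * b i j) := by
    have step : ∀ i, a i * (d i + 2 * ∑ j, a j * b i j)
        = a i * d i + 2 * ∑ j, a i * (a j * b i j) := fun i => by
      rw [mul_add, mul_left_comm, Finset.mul_sum]
    calc ∑ i, a i * (d i + 2 * ∑ j, a j * b i j)
        = ∑ i, (a i * d i + 2 * ∑ j, a i * (a j * b i j)) :=
          Finset.sum_congr rfl (fun i _ => step i)
      _ = (∑ i, a i * d i) + ∑ i, 2 * ∑ j, a i * (a j * b i j) := sum_split _ _
      _ = (∑ i, a i * d i) + 2 * ∑ i, ∑ j, a i * (a j * b i j) := by rw [pull]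
  have T2 : ∑ j, (e j + 2 * (∑ i, (b j i * b j i + a i * c j i)))
      = (∑ j, e j) + (2 * ∑ j, ∑ i, b j i * b j i + 2 * ∑ j, ∑ i, a i * c j i) := by
    have step : ∀ j, e j + 2 * (∑ i, (b j i * b j i + a i * c j i))
        = e j + (2 * ∑ i, b j i * b j i + 2 * ∑ i, a i * c j i) := fun j => by
      rw [sum_split, mul_add]
    calc ∑ j, (e j + 2 * (∑ i, (b j i * b j i + a i * c j i)))
        = ∑ j, (e j + (2 * ∑ i, b j i * b j i + 2 * ∑ i, a i * c j i)) :=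
          Finset.sum_congr rfl (fun j _ => step j)
      _ = (∑ j, e j) + ∑ j, (2 * ∑ i, b j i * b j i + 2 * ∑ i, a i * c j i) := sum_split _ _
      _ = (∑ j, e j) + ((∑ j, 2 * ∑ i, b j i * b j i) + ∑ j, 2 * ∑ i, a i * c j i) := by
          rw [sum_split]
      _ = (∑ j, e j) + (2 * ∑ j, ∑ i, b j i * b j i + 2 * ∑ j, ∑ i, a i * c j i) := by
          rw [pull, pull]
  have T3 : ∑ j, ((-2) * (∑ i, (b j i * b j i + a i * c j i)) + (-2) * e j)
      = ((-2) * ∑ j, ∑ i, b j i * b j i + (-2) * ∑ j, ∑ i, a i * c j i) + (-2) * ∑ j, e j := by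
    have step : ∀ j, (-2) * (∑ i, (b j i * b j i + a i * c j i)) + (-2) * e j
        = ((-2) * ∑ i, b j i * b j i + (-2) * ∑ i, a i * c j i) + (-2) * e j := fun j => by
      rw [sum_split, mul_add]
    calc ∑ j, ((-2) * (∑ i, (b j i * b j i + a i * c j i)) + (-2) * e j)
        = ∑ j, (((-2) * ∑ i, b j i * b j i + (-2) * ∑ i, a i * c j i) + (-2) * e j) :=
          Finset.sum_congr rfl (fun j _ => step j)
      _ = (∑ j, ((-2) * ∑ i, b j i * b j i + (-2) * ∑ i, a i * c j i)) + ∑ j, (-2) * e j :=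
          sum_split _ _
      _ = ((∑ j, (-2) * ∑ i, b j i * b j i) + ∑ j, (-2) * ∑ i, a i * c j i) + ∑ j, (-2) * e j := by
          rw [sum_split]
      _ = ((-2) * ∑ j, ∑ i, b j i * b j i + (-2) * ∑ j, ∑ i, a i * c j i) + (-2) * ∑ j, e j := by
          rw [pull, pull, pull]
  have T4 : ∑ j, a j * ((-2) * (∑ i, a i * b j i) + (-2) * d j)
      = (-2) * (∑ j, ∑ i, a j * (a i * b j i)) + (-2) * ∑ j, a j * d j := by
    have step : ∀ j, a j * ((-2) * (∑ i, a i * b j i) + (-2) * d j)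
        = (-2) * (∑ i, a j * (a i * b j i)) + (-2) * (a j * d j) := fun j => by
      rw [mul_add, mul_left_comm, Finset.mul_sum, mul_left_comm]
    calc ∑ j, a j * ((-2) * (∑ i, a i * b j i) + (-2) * d j)
        = ∑ j, ((-2) * (∑ i, a j * (a i * b j i)) + (-2) * (a j * d j)) :=
          Finset.sum_congr rfl (fun j _ => step j)
      _ = (∑ j, (-2) * ∑ i, a j * (a i * b j i)) + ∑ j, (-2) * (a j * d j) := sum_split _ _
      _ = (-2) * (∑ j, ∑ i, a j * (a i * b j i)) + (-2) * ∑ j, a j * d j := by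
          rw [pull, pull]
  rw [T1, T2, T3, T4, key]
  ring

section main
open Finset

variable {n : ℕ}

def LYdom (n : ℕ) : Set (ℝ × (Fin n → ℝ)) := Set.Ioi 0 ×ˢ Set.univ

theorem LYdom_open : IsOpen (LYdom n) := isOpen_Ioi.prod isOpen_univ

theorem mem_LYdom {p : ℝ × (Fin n → ℝ)} : p ∈ LYdom n ↔ 0 < p.1 := by
  simp [LYdom]

def eeT (n : ℕ) : ℝ × (Fin n → ℝ) := (1, 0)
def eeS {n : ℕ} (i : Fin n) : ℝ × (Fin n → ℝ) := (0, Pi.single i 1)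

variable (g : ℝ × (Fin n → ℝ) → ℝ)

def LW : ℝ × (Fin n → ℝ) → ℝ := fun p => Real.log (g p)
def LA (i : Fin n) : ℝ × (Fin n → ℝ) → ℝ := Dv (eeS i) (LW g)
def LTm : ℝ × (Fin n → ℝ) → ℝ := Dv (eeT n) (LW g)
def LDel : ℝ × (Fin n → ℝ) → ℝ := fun p => ∑ i, Dv (eeS i) (LA g i) p
def LPt : ℝ × (Fin n → ℝ) → ℝ := fun p => (∑ i, (LA g i p)^2) - 2 * LTm g p

variable {g}
variable (hg : ContDiffOn ℝ (⊤:ℕ∞) g (LYdom n))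
  (hgpos : ∀ p ∈ LYdom n, 0 < g p)

section smoothbank
include hg hgpos

theorem sW : ContDiffOn ℝ (⊤:ℕ∞) (LW g) (LYdom n) :=
  hg.log (fun p hp => ne_of_gt (hgpos p hp))

theorem sA (i : Fin n) : ContDiffOn ℝ (⊤:ℕ∞) (LA g i) (LYdom n) :=
  Dv_smoothOn LYdom_open (sW hg hgpos) _

theorem sT : ContDiffOn ℝ (⊤:ℕ∞) (LTm g) (LYdom n) :=
  Dv_smoothOn LYdom_open (sW hg hgpos) _

theorem sDA (v : ℝ × (Fin n → ℝ)) (i : Fin n) :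
    ContDiffOn ℝ (⊤:ℕ∞) (Dv v (LA g i)) (LYdom n) :=
  Dv_smoothOn LYdom_open (sA hg hgpos i) _

theorem sDel : ContDiffOn ℝ (⊤:ℕ∞) (LDel g) (LYdom n) := by
  have : ContDiffOn ℝ (⊤:ℕ∞) (fun p => ∑ i, Dv (eeS i) (LA g i) p) (LYdom n) := by
    apply ContDiffOn.sum
    intro i _
    exact sDA hg hgpos _ i
  exact this

theorem sPt : ContDiffOn ℝ (⊤:ℕ∞) (LPt g) (LYdom n) := by
  apply ContDiffOn.sub
  · apply ContDiffOn.sum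
    intro i _
    exact (sA hg hgpos i).pow 2
  · exact (contDiffOn_const).mul (sT hg hgpos)

end smoothbank

variable (hgheat : ∀ p ∈ LYdom n, Dv (eeT n) g p = ∑ i, Dv (eeS i) (Dv (eeS i) g) p)

include hg hgpos

theorem lemA : ∀ (i : Fin n), ∀ q ∈ LYdom n, LA g i q = Dv (eeS i) g q / g q :=
  fun i q hq => Dv_log (diffAt_of_smoothOn LYdom_open hg hq) (ne_of_gt (hgpos q hq))

theorem lemT : ∀ q ∈ LYdom n, LTm g q = Dv (eeT n) g q / g q :=
  fun q hq => Dv_log (diffAt_of_smoothOn LYdom_open hg hq) (ne_of_gt (hgpos q hq))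

include hgheat in
theorem heatW : ∀ p ∈ LYdom n, LTm g p = LDel g p + ∑ i, (LA g i p)^2 := by
  intro p hp
  have hO : IsOpen (LYdom n) := LYdom_open
  have hgp : g p ≠ 0 := ne_of_gt (hgpos p hp)
  have hkey : ∀ i, g p * Dv (eeS i) (LA g i) p
      = Dv (eeS i) (Dv (eeS i) g) p - Dv (eeS i) g p * LA g i p := by
    intro i
    have hEq : Set.EqOn (fun q => g q * LA g i q) (Dv (eeS i) g) (LYdom n) := by
      intro q hq
      simp only
      rw [lemA hg hgpos i q hq, mul_div_cancel₀ _ (ne_of_gt (hgpos q hq))]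
    have h1 := Dv_congr (v := eeS i) hO hEq hp
    have h2 := Dv_mul (v := eeS i) (diffAt_of_smoothOn hO hg hp)
      (diffAt_of_smoothOn hO (sA hg hgpos i) hp)
    rw [h2] at h1
    linarith [h1]
  have h3 : ∀ i, g p * (LA g i p)^2 = Dv (eeS i) g p * LA g i p := by
    intro i
    rw [lemA hg hgpos i p hp]
    field_simp
  apply mul_left_cancel₀ hgp
  rw [lemT hg hgpos p hp, mul_div_cancel₀ _ hgp, hgheat p hp]
  have h4 : g p * LDel g p = ∑ i, (Dv (eeS i) (Dv (eeS i) g) p - Dv (eeS i) g p * LA g i p) := by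
    rw [LDel, Finset.mul_sum]
    exact Finset.sum_congr rfl (fun i _ => hkey i)
  rw [mul_add, h4, Finset.mul_sum]
  rw [Finset.sum_congr rfl (fun i _ => h3 i), Finset.sum_sub_distrib]
  ring

theorem sSq : ContDiffOn ℝ (⊤:ℕ∞) (fun q => ∑ i, (LA g i q)^2) (LYdom n) := by
  apply ContDiffOn.sum
  intro i _
  exact (sA hg hgpos i).pow 2

include hgheat in
theorem lemDT (v : ℝ × (Fin n → ℝ)) : ∀ p ∈ LYdom n,
    Dv v (LTm g) p = Dv v (LDel g) p + 2 * ∑ i, LA g i p * Dv v (LA g i) p := by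
  intro p hp
  have hO : IsOpen (LYdom n) := LYdom_open
  have h1 : Dv v (LTm g) p = Dv v (fun q => LDel g q + ∑ i, (LA g i q)^2) p :=
    Dv_congr hO (fun q hq => heatW hg hgpos hgheat q hq) hp
  rw [h1, Dv_add (F := LDel g) (G := fun q => ∑ i, (LA g i q)^2)
      (diffAt_of_smoothOn hO (sDel hg hgpos) hp) (diffAt_of_smoothOn hO (sSq hg hgpos) hp),
    Dv_sum (H := fun i q => (LA g i q)^2) Finset.univ
      (fun i _ => diffAt_of_smoothOn hO ((sA hg hgpos i).pow 2) hp)]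
  rw [Finset.sum_congr rfl (fun i _ => Dv_sq (v := v)
      (diffAt_of_smoothOn hO (sA hg hgpos i) hp)), Finset.mul_sum]
  congr 1
  exact Finset.sum_congr rfl (fun i _ => by ring)

include hgheat in
theorem lemDPt (v : ℝ × (Fin n → ℝ)) : ∀ p ∈ LYdom n,
    Dv v (LPt g) p = (-2) * (∑ i, LA g i p * Dv v (LA g i) p) + (-2) * Dv v (LDel g) p := by
  intro p hp
  have hO : IsOpen (LYdom n) := LYdom_open
  unfold LPt
  rw [Dv_sub (F := fun q => ∑ i, (LA g i q)^2) (G := fun q => 2 * LTm g q)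
      (diffAt_of_smoothOn hO (sSq hg hgpos) hp)
      (diffAt_of_smoothOn hO ((contDiffOn_const).mul (sT hg hgpos)) hp),
    Dv_sum (H := fun i q => (LA g i q)^2) Finset.univ
      (fun i _ => diffAt_of_smoothOn hO ((sA hg hgpos i).pow 2) hp),
    Dv_const_mul (diffAt_of_smoothOn hO (sT hg hgpos) hp) 2,
    lemDT hg hgpos hgheat v p hp,
    Finset.sum_congr rfl (fun i _ => Dv_sq (v := v)
      (diffAt_of_smoothOn hO (sA hg hgpos i) hp))]
  rw [show (∑ i, 2 * LA g i p * Dv v (LA g i) p) = 2 * ∑ i, LA g i p * Dv v (LA g i) p by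
    rw [Finset.mul_sum]; exact Finset.sum_congr rfl (fun i _ => by ring)]
  ring

theorem sADA (v : ℝ × (Fin n → ℝ)) :
    ContDiffOn ℝ (⊤:ℕ∞) (fun q => ∑ i, LA g i q * Dv v (LA g i) q) (LYdom n) := by
  apply ContDiffOn.sum
  intro i _
  exact (sA hg hgpos i).mul (sDA hg hgpos v i)

include hgheat in
theorem lemDDPt (j : Fin n) : ∀ p ∈ LYdom n,
    Dv (eeS j) (Dv (eeS j) (LPt g)) p
      = (-2) * (∑ i, (Dv (eeS j) (LA g i) p * Dv (eeS j) (LA g i) p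
          + LA g i p * Dv (eeS j) (Dv (eeS j) (LA g i)) p))
        + (-2) * Dv (eeS j) (Dv (eeS j) (LDel g)) p := by
  intro p hp
  have hO : IsOpen (LYdom n) := LYdom_open
  have hEq : Set.EqOn (Dv (eeS j) (LPt g))
      (fun q => (-2) * (∑ i, LA g i q * Dv (eeS j) (LA g i) q)
        + (-2) * Dv (eeS j) (LDel g) q) (LYdom n) :=
    fun q hq => lemDPt hg hgpos hgheat (eeS j) q hq
  rw [Dv_congr (v := eeS j) hO hEq hp,
    Dv_add (F := fun q => (-2) * (∑ i, LA g i q * Dv (eeS j) (LA g i) q))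
      (G := fun q => (-2) * Dv (eeS j) (LDel g) q)
      (diffAt_of_smoothOn hO ((contDiffOn_const).mul (sADA hg hgpos (eeS j))) hp)
      (diffAt_of_smoothOn hO ((contDiffOn_const).mul
        (Dv_smoothOn hO (sDel hg hgpos) (eeS j))) hp),
    Dv_const_mul (diffAt_of_smoothOn hO (sADA hg hgpos (eeS j)) hp) (-2),
    Dv_const_mul (diffAt_of_smoothOn hO (Dv_smoothOn hO (sDel hg hgpos) (eeS j)) hp) (-2),
    Dv_sum (H := fun i q => LA g i q * Dv (eeS j) (LA g i) q) Finset.univ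
      (fun i _ => ((diffAt_of_smoothOn hO (sA hg hgpos i) hp).mul
        (diffAt_of_smoothOn hO (sDA hg hgpos (eeS j) i) hp))),
    Finset.sum_congr rfl (fun i _ => Dv_mul (v := eeS j)
      (diffAt_of_smoothOn hO (sA hg hgpos i) hp)
      (diffAt_of_smoothOn hO (sDA hg hgpos (eeS j) i) hp))]

theorem lemWcomm : ∀ p ∈ LYdom n, ∀ a b, Dv a (Dv b (LW g)) p = Dv b (Dv a (LW g)) p :=
  fun p hp a b => Dv_comm LYdom_open (sW hg hgpos) hp a b

theorem lemAswap (j k : Fin n) : Set.EqOn (Dv (eeS j) (LA g k)) (Dv (eeS k) (LA g j)) (LYdom n) := by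
  intro q hq
  unfold LA
  exact lemWcomm hg hgpos q hq _ _

theorem lemDDel (j : Fin n) : ∀ p ∈ LYdom n,
    Dv (eeS j) (LDel g) p = ∑ k, Dv (eeS k) (Dv (eeS k) (LA g j)) p := by
  intro p hp
  have hO : IsOpen (LYdom n) := LYdom_open
  unfold LDel
  rw [Dv_sum (H := fun k q => Dv (eeS k) (LA g k) q) Finset.univ
    (fun k _ => diffAt_of_smoothOn hO (Dv_smoothOn hO (sA hg hgpos k) _) hp)]
  refine Finset.sum_congr rfl (fun k _ => ?_)
  rw [Dv_comm hO (sA hg hgpos k) hp]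
  exact Dv_congr hO (lemAswap hg hgpos j k) hp

include hgheat in
theorem lemDTA (i : Fin n) : ∀ p ∈ LYdom n,
    Dv (eeT n) (LA g i) p
      = Dv (eeS i) (LDel g) p + 2 * ∑ j, LA g j p * Dv (eeS i) (LA g j) p := by
  intro p hp
  have h1 : Dv (eeT n) (LA g i) p = Dv (eeS i) (LTm g) p := by
    unfold LA LTm
    exact lemWcomm hg hgpos p hp _ _
  rw [h1, lemDT hg hgpos hgheat (eeS i) p hp]

include hgheat in
theorem lemDDT (j : Fin n) : ∀ p ∈ LYdom n,
    Dv (eeS j) (Dv (eeS j) (LTm g)) p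
      = Dv (eeS j) (Dv (eeS j) (LDel g)) p
        + 2 * (∑ i, (Dv (eeS j) (LA g i) p * Dv (eeS j) (LA g i) p
          + LA g i p * Dv (eeS j) (Dv (eeS j) (LA g i)) p)) := by
  intro p hp
  have hO : IsOpen (LYdom n) := LYdom_open
  have hEq : Set.EqOn (Dv (eeS j) (LTm g))
      (fun q => Dv (eeS j) (LDel g) q + 2 * ∑ i, LA g i q * Dv (eeS j) (LA g i) q) (LYdom n) :=
    fun q hq => lemDT hg hgpos hgheat (eeS j) q hq
  rw [Dv_congr (v := eeS j) hO hEq hp,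
    Dv_add (F := Dv (eeS j) (LDel g))
      (G := fun q => 2 * ∑ i, LA g i q * Dv (eeS j) (LA g i) q)
      (diffAt_of_smoothOn hO (Dv_smoothOn hO (sDel hg hgpos) (eeS j)) hp)
      (diffAt_of_smoothOn hO ((contDiffOn_const).mul (sADA hg hgpos (eeS j))) hp),
    Dv_const_mul (diffAt_of_smoothOn hO (sADA hg hgpos (eeS j)) hp) 2,
    Dv_sum (H := fun i q => LA g i q * Dv (eeS j) (LA g i) q) Finset.univ
      (fun i _ => ((diffAt_of_smoothOn hO (sA hg hgpos i) hp).mul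
        (diffAt_of_smoothOn hO (sDA hg hgpos (eeS j) i) hp))),
    Finset.sum_congr rfl (fun i _ => Dv_mul (v := eeS j)
      (diffAt_of_smoothOn hO (sA hg hgpos i) hp)
      (diffAt_of_smoothOn hO (sDA hg hgpos (eeS j) i) hp))]

include hgheat in
theorem lemDTDel : ∀ p ∈ LYdom n,
    Dv (eeT n) (LDel g) p
      = ∑ j, (Dv (eeS j) (Dv (eeS j) (LDel g)) p
        + 2 * (∑ i, (Dv (eeS j) (LA g i) p * Dv (eeS j) (LA g i) p
          + LA g i p * Dv (eeS j) (Dv (eeS j) (LA g i)) p))) := by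
  intro p hp
  have hO : IsOpen (LYdom n) := LYdom_open
  unfold LDel
  rw [Dv_sum (H := fun k q => Dv (eeS k) (LA g k) q) Finset.univ
    (fun k _ => diffAt_of_smoothOn hO (Dv_smoothOn hO (sA hg hgpos k) _) hp)]
  refine Finset.sum_congr rfl (fun j _ => ?_)
  rw [Dv_comm hO (sA hg hgpos j) hp]
  have hEq : Set.EqOn (Dv (eeT n) (LA g j)) (Dv (eeS j) (LTm g)) (LYdom n) := by
    intro q hq
    unfold LA LTm
    exact lemWcomm hg hgpos q hq _ _
  rw [Dv_congr hO hEq hp]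
  exact lemDDT hg hgpos hgheat j p hp

include hgheat in
theorem evolution : ∀ p ∈ LYdom n,
    Dv (eeT n) (LPt g) p
      = (∑ j, Dv (eeS j) (Dv (eeS j) (LPt g)) p)
        + 2 * ∑ j, LA g j p * Dv (eeS j) (LPt g) p
        - 2 * ∑ j, ∑ i, Dv (eeS j) (LA g i) p * Dv (eeS j) (LA g i) p := by
  intro p hp
  rw [lemDPt hg hgpos hgheat (eeT n) p hp]
  rw [show (∑ i, LA g i p * Dv (eeT n) (LA g i) p)
      = ∑ i, LA g i p * (Dv (eeS i) (LDel g) p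
          + 2 * ∑ j, LA g j p * Dv (eeS i) (LA g j) p) from
    Finset.sum_congr rfl (fun i _ => by rw [lemDTA hg hgpos hgheat i p hp])]
  rw [lemDTDel hg hgpos hgheat p hp]
  rw [show (∑ j, Dv (eeS j) (Dv (eeS j) (LPt g)) p)
      = ∑ j, ((-2) * (∑ i, (Dv (eeS j) (LA g i) p * Dv (eeS j) (LA g i) p
          + LA g i p * Dv (eeS j) (Dv (eeS j) (LA g i)) p))
        + (-2) * Dv (eeS j) (Dv (eeS j) (LDel g)) p) from
    Finset.sum_congr rfl (fun j _ => lemDDPt hg hgpos hgheat j p hp)]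
  rw [show (∑ j, LA g j p * Dv (eeS j) (LPt g) p)
      = ∑ j, LA g j p * ((-2) * (∑ i, LA g i p * Dv (eeS j) (LA g i) p)
        + (-2) * Dv (eeS j) (LDel g) p) from
    Finset.sum_congr rfl (fun j _ => by rw [lemDPt hg hgpos hgheat (eeS j) p hp])]
  exact algebra_key (fun i => LA g i p) (fun i => Dv (eeS i) (LDel g) p)
    (fun j => Dv (eeS j) (Dv (eeS j) (LDel g)) p)
    (fun j i => Dv (eeS j) (LA g i) p)
    (fun j i => Dv (eeS j) (Dv (eeS j) (LA g i)) p)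
    (fun i => lemDDel hg hgpos i p hp)

include hgheat in
theorem lemPtform : ∀ p ∈ LYdom n,
    LPt g p = (-2) * LDel g p - ∑ i, (LA g i p)^2 := by
  intro p hp
  have h := heatW hg hgpos hgheat p hp
  unfold LPt
  rw [h]
  ring

theorem perLPt
    (hgper : ∀ p ∈ LYdom n, ∀ m : Fin n → ℤ, g (p.1, p.2 + fun i => (m i:ℝ)) = g p) :
    ∀ p ∈ LYdom n, ∀ m : Fin n → ℤ,
      LPt g (p + ((0:ℝ), fun i => (m i:ℝ))) = LPt g p := by
  intro p hp m
  set c : ℝ × (Fin n → ℝ) := ((0:ℝ), fun i => (m i:ℝ)) with hcdef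
  have hc : ∀ q ∈ LYdom n, q + c ∈ LYdom n := by
    intro q hq
    rw [mem_LYdom] at hq ⊢
    simpa [hcdef] using hq
  have hpair : ∀ q : ℝ × (Fin n → ℝ), q + c = (q.1, q.2 + fun i => (m i:ℝ)) := by
    intro q
    simp [hcdef, Prod.ext_iff]
  have hgper' : ∀ q ∈ LYdom n, g (q + c) = g q := by
    intro q hq
    rw [hpair q]
    exact hgper q hq m
  have hWper : ∀ q ∈ LYdom n, LW g (q + c) = LW g q := by
    intro q hq
    unfold LW
    rw [hgper' q hq]
  have hAper : ∀ i, ∀ q ∈ LYdom n, LA g i (q + c) = LA g i q :=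
    fun i q hq => Dv_per LYdom_open (sW hg hgpos) hc hWper _ q hq
  have hTper : ∀ q ∈ LYdom n, LTm g (q + c) = LTm g q :=
    fun q hq => Dv_per LYdom_open (sW hg hgpos) hc hWper _ q hq
  have hDAper : ∀ i, ∀ q ∈ LYdom n,
      Dv (eeS i) (LA g i) (q + c) = Dv (eeS i) (LA g i) q :=
    fun i q hq => Dv_per LYdom_open (sA hg hgpos i) hc
      (fun q' hq' => hAper i q' hq') _ q hq
  unfold LPt
  rw [hTper p hp]
  congr 1
  exact Finset.sum_congr rfl (fun i _ => by rw [hAper i p hp])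

theorem sQ (σ : ℝ) : ContDiffOn ℝ (⊤:ℕ∞) (fun q : ℝ × (Fin n → ℝ) => (q.1 - σ) * LPt g q)
    (LYdom n) :=
  ((contDiff_fst.sub contDiff_const).contDiffOn).mul (sPt hg hgpos)

theorem lemDQ (σ : ℝ) (v : ℝ × (Fin n → ℝ)) : ∀ p ∈ LYdom n,
    Dv v (fun q : ℝ × (Fin n → ℝ) => (q.1 - σ) * LPt g q) p
      = v.1 * LPt g p + (p.1 - σ) * Dv v (LPt g) p := by
  intro p hp
  have hO : IsOpen (LYdom n) := LYdom_open
  have hfst : DifferentiableAt ℝ (fun q : ℝ × (Fin n → ℝ) => q.1 - σ) p :=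
    (differentiable_fst.sub_const σ).differentiableAt
  rw [Dv_mul (F := fun q : ℝ × (Fin n → ℝ) => q.1 - σ) (G := LPt g) hfst
    (diffAt_of_smoothOn hO (sPt hg hgpos) hp)]
  have h1 : Dv v (fun q : ℝ × (Fin n → ℝ) => q.1 - σ) p = v.1 := by
    have hF : HasFDerivAt (fun q : ℝ × (Fin n → ℝ) => q.1 - σ)
        (ContinuousLinearMap.fst ℝ ℝ (Fin n → ℝ)) p := (hasFDerivAt_fst).sub_const σ
    simp [Dv, hF.fderiv]
  rw [h1]

include hgheat in
theorem lemDDQ (σ : ℝ) (j : Fin n) : ∀ p ∈ LYdom n,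
    Dv (eeS j) (Dv (eeS j) (fun q : ℝ × (Fin n → ℝ) => (q.1 - σ) * LPt g q)) p
      = (p.1 - σ) * Dv (eeS j) (Dv (eeS j) (LPt g)) p := by
  intro p hp
  have hO : IsOpen (LYdom n) := LYdom_open
  have hEq : Set.EqOn (Dv (eeS j) (fun q : ℝ × (Fin n → ℝ) => (q.1 - σ) * LPt g q))
      (fun q => (eeS j).1 * LPt g q + (q.1 - σ) * Dv (eeS j) (LPt g) q) (LYdom n) :=
    fun q hq => lemDQ hg hgpos σ (eeS j) q hq
  rw [Dv_congr (v := eeS j) hO hEq hp]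
  have hS0 : (eeS j).1 = (0:ℝ) := rfl
  have hfst : DifferentiableAt ℝ (fun q : ℝ × (Fin n → ℝ) => q.1 - σ) p :=
    (differentiable_fst.sub_const σ).differentiableAt
  have hdPt : DifferentiableAt ℝ (LPt g) p := diffAt_of_smoothOn hO (sPt hg hgpos) hp
  have hdDPt : DifferentiableAt ℝ (Dv (eeS j) (LPt g)) p :=
    diffAt_of_smoothOn hO (Dv_smoothOn hO (sPt hg hgpos) _) hp
  rw [Dv_add (F := fun q => (eeS j).1 * LPt g q)
      (G := fun q => (q.1 - σ) * Dv (eeS j) (LPt g) q)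
      (hdPt.const_mul _) (hfst.mul hdDPt),
    Dv_const_mul hdPt ((eeS j).1),
    Dv_mul (F := fun q : ℝ × (Fin n → ℝ) => q.1 - σ) (G := Dv (eeS j) (LPt g)) hfst hdDPt]
  have h1 : Dv (eeS j) (fun q : ℝ × (Fin n → ℝ) => q.1 - σ) p = (0:ℝ) := by
    have hF : HasFDerivAt (fun q : ℝ × (Fin n → ℝ) => q.1 - σ)
        (ContinuousLinearMap.fst ℝ ℝ (Fin n → ℝ)) p := (hasFDerivAt_fst).sub_const σ
    simp [Dv, hF.fderiv, hS0]
  rw [h1, hS0]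
  ring

set_option maxHeartbeats 1000000 in
include hgheat in
theorem claim_sigma (hn : 1 ≤ n)
    (hgper : ∀ p ∈ LYdom n, ∀ m : Fin n → ℤ, g (p.1, p.2 + fun i => (m i:ℝ)) = g p)
    {t0 σ : ℝ} (x0 : Fin n → ℝ) (hσ0 : 0 < σ) (hσt : σ < t0) :
    (t0 - σ) * LPt g (t0, x0) ≤ 2 * n := by
  have hO : IsOpen (LYdom n) := LYdom_open
  set Qf : ℝ × (Fin n → ℝ) → ℝ := fun q => (q.1 - σ) * LPt g q with hQdef
  set K : Set (ℝ × (Fin n → ℝ)) := Set.Icc ((σ, 0) : ℝ × (Fin n → ℝ)) ((t0, 1)) with hKdef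
  have hKsub : K ⊆ LYdom n := by
    intro q hq
    rw [mem_LYdom]
    have := hq.1.1
    simp only [Prod.fst] at this
    linarith
  have hKcomp : IsCompact K := isCompact_Icc
  have hKne : K.Nonempty := Set.nonempty_Icc.mpr (Prod.mk_le_mk.mpr ⟨le_of_lt hσt,
    (by intro i; norm_num : (0 : Fin n → ℝ) ≤ 1)⟩)
  have hQcont : ContinuousOn Qf K := ((sQ hg hgpos σ).continuousOn).mono hKsub
  obtain ⟨ps, hpsK, hmax⟩ := hKcomp.exists_isMaxOn hKne hQcont
  have hpsdom : ps ∈ LYdom n := hKsub hpsK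
  set M : ℝ := Qf ps with hMdef
  -- reduction: all (t,y) with t ∈ [σ,t0] satisfy Qf (t,y) ≤ M
  have hR : ∀ t ∈ Set.Icc σ t0, ∀ y : Fin n → ℝ, Qf (t, y) ≤ M := by
    intro t ht y
    have ht0' : (0:ℝ) < t := lt_of_lt_of_le hσ0 ht.1
    set ybox : Fin n → ℝ := fun i => Int.fract (y i) with hybox
    have hyK : ((t, ybox) : ℝ × (Fin n → ℝ)) ∈ K := by
      rw [hKdef, Set.mem_Icc]
      constructor
      · exact Prod.mk_le_mk.mpr ⟨ht.1, fun i => Int.fract_nonneg _⟩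
      · exact Prod.mk_le_mk.mpr ⟨ht.2, fun i => le_of_lt (Int.fract_lt_one _)⟩
    have hper : LPt g (t, y) = LPt g (t, ybox) := by
      have hdom : ((t, ybox) : ℝ × (Fin n → ℝ)) ∈ LYdom n := mem_LYdom.mpr ht0'
      have := perLPt hg hgpos hgper (t, ybox) hdom (fun i => ⌊y i⌋)
      have hpt : ((t, ybox) : ℝ × (Fin n → ℝ)) + ((0:ℝ), fun i => ((⌊y i⌋ : ℤ) : ℝ)) = (t, y) := by
        have h1 : ybox + (fun i => ((⌊y i⌋ : ℤ) : ℝ)) = y := by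
          funext i
          simp only [Pi.add_apply]
          exact Int.fract_add_floor (y i)
        simp [Prod.ext_iff, h1]
      rw [hpt] at this
      exact this
    calc Qf (t, y) = (t - σ) * LPt g (t, y) := rfl
      _ = (t - σ) * LPt g (t, ybox) := by rw [hper]
      _ = Qf (t, ybox) := rfl
      _ ≤ M := hmax hyK
  -- conclude if M ≤ 2n
  have hfinal : M ≤ 2 * n → (t0 - σ) * LPt g (t0, x0) ≤ 2 * n := by
    intro hMle
    have h := hR t0 (Set.right_mem_Icc.mpr (le_of_lt hσt)) x0
    calc (t0 - σ) * LPt g (t0, x0) = Qf (t0, x0) := rfl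
      _ ≤ M := h
      _ ≤ 2*n := hMle
  refine hfinal ?_
  by_contra hMgt
  push_neg at hMgt
  exfalso
  have hps_eta : ((ps.1, ps.2) : ℝ × (Fin n → ℝ)) = ps := rfl
  have htlow : σ ≤ ps.1 := (hpsK.1).1
  have hthigh : ps.1 ≤ t0 := (hpsK.2).1
  have htpos : 0 < ps.1 := lt_of_lt_of_le hσ0 htlow
  have hn2 : (2:ℝ) ≤ 2*n := by
    have : (1:ℝ) ≤ n := by exact_mod_cast hn
    linarith
  have hM0 : 0 < M := by linarith
  have hσlt : σ < ps.1 := by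
    rcases eq_or_lt_of_le htlow with h | h
    · exfalso
      have : M = 0 := by
        rw [hMdef, hQdef]
        simp [← h]
      linarith
    · exact h
  have hτpos : 0 < ps.1 - σ := by linarith
  -- spatial facts at ps
  have hkey_spatial : ∀ i : Fin n, Dv (eeS i) Qf ps = 0 ∧ Dv (eeS i) (Dv (eeS i) Qf) ps ≤ 0 := by
    intro i
    set φ : ℝ → ℝ := fun s => Qf (ps.1, ps.2 + s • (Pi.single i 1 : Fin n → ℝ)) with hφdef
    set ψ : ℝ → ℝ := fun s => Dv ((0:ℝ), (Pi.single i 1 : Fin n → ℝ)) Qf (ps.1, ps.2 + s • (Pi.single i 1 : Fin n → ℝ))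
      with hψdef
    have hbase : ∀ s : ℝ, ((ps.1, ps.2 + s • (Pi.single i 1 : Fin n → ℝ)) : ℝ × (Fin n → ℝ)) ∈ LYdom n :=
      fun s => mem_LYdom.mpr htpos
    have hφd : ∀ s, HasDerivAt φ (ψ s) s := fun s =>
      line_spatial (diffAt_of_smoothOn hO (sQ hg hgpos σ) (hbase s))
    have hψd : HasDerivAt ψ
        (Dv ((0:ℝ), (Pi.single i 1 : Fin n → ℝ)) (Dv ((0:ℝ), (Pi.single i 1 : Fin n → ℝ)) Qf)
          (ps.1, ps.2 + (0:ℝ) • (Pi.single i 1 : Fin n → ℝ))) 0 :=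
      line_spatial (diffAt_of_smoothOn hO
        (Dv_smoothOn hO (sQ hg hgpos σ) _) (hbase 0))
    have hx0 : ps.2 + (0:ℝ) • (Pi.single i 1 : Fin n → ℝ) = ps.2 := by simp
    have hφ0 : φ 0 = M := by
      rw [hφdef]
      simp only
      rw [hx0, hps_eta, hMdef]
    have hmaxφ : IsLocalMax φ 0 := by
      apply Filter.Eventually.of_forall
      intro s
      rw [hφ0]
      exact hR ps.1 ⟨htlow, hthigh⟩ _
    constructor
    · have h1 : ψ 0 = 0 := by
        have := hmaxφ.deriv_eq_zero
        rwa [(hφd 0).deriv] at this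
      have h2 : ψ 0 = Dv (eeS i) Qf ps := by
        rw [hψdef]
        simp only
        rw [hx0, hps_eta]
        rfl
      rw [← h2, h1]
    · have h3 := secondDeriv_nonpos_of_isLocalMax hmaxφ hφd hψd
      rw [hx0, hps_eta] at h3
      exact h3
  -- time fact at ps
  have hkey_time : 0 ≤ Dv (eeT n) Qf ps := by
    have hθd : HasDerivAt (fun s => Qf (s, ps.2)) (Dv ((1:ℝ), (0 : Fin n → ℝ)) Qf (ps.1, ps.2))
        ps.1 := line_time (diffAt_of_smoothOn hO (sQ hg hgpos σ) (by rw [hps_eta]; exact hpsdom))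
    have hmaxθ : ∀ s ∈ Set.Icc σ ps.1, Qf (s, ps.2) ≤ Qf (ps.1, ps.2) := by
      intro s hs
      rw [hps_eta]
      exact hR s ⟨hs.1, le_trans hs.2 hthigh⟩ _
    have := deriv_nonneg_of_left_max hσlt hθd hmaxθ
    rw [hps_eta] at this
    exact this
  -- translate to LPt facts
  have hDiPt : ∀ i : Fin n, Dv (eeS i) (LPt g) ps = 0 := by
    intro i
    have h1 := lemDQ hg hgpos σ (eeS i) ps hpsdom
    rw [← hQdef] at h1
    have h2 := (hkey_spatial i).1
    rw [h2] at h1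
    have h3 : (eeS i).1 = (0:ℝ) := rfl
    rw [h3] at h1
    have := h1.symm
    simp only [zero_mul, zero_add] at this
    rcases mul_eq_zero.mp this with h | h
    · exact absurd h (ne_of_gt hτpos)
    · exact h
  have hDjjPt : ∀ j : Fin n, Dv (eeS j) (Dv (eeS j) (LPt g)) ps ≤ 0 := by
    intro j
    have h1 := lemDDQ hg hgpos hgheat σ j ps hpsdom
    rw [← hQdef] at h1
    have h2 := (hkey_spatial j).2
    rw [h1] at h2
    by_contra hX
    push_neg at hX
    nlinarith [mul_pos hτpos hX]
  have hDtPt : Dv (eeT n) Qf ps = LPt g ps + (ps.1 - σ) * Dv (eeT n) (LPt g) ps := by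
    have h1 := lemDQ hg hgpos σ (eeT n) ps hpsdom
    rw [← hQdef] at h1
    have h3 : (eeT n).1 = (1:ℝ) := rfl
    rw [h3, one_mul] at h1
    exact h1
  -- evolution at ps
  have hev := evolution hg hgpos hgheat ps hpsdom
  set S : ℝ := ∑ j, ∑ i, Dv (eeS j) (LA g i) ps * Dv (eeS j) (LA g i) ps with hSdef
  have hzero : (∑ j, LA g j ps * Dv (eeS j) (LPt g) ps) = 0 :=
    Finset.sum_eq_zero (fun j _ => by rw [hDiPt j]; ring)
  have hΔ : (∑ j, Dv (eeS j) (Dv (eeS j) (LPt g)) ps) ≤ 0 :=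
    Finset.sum_nonpos (fun j _ => hDjjPt j)
  have hmain : 0 ≤ LPt g ps + (ps.1 - σ) * ((∑ j, Dv (eeS j) (Dv (eeS j) (LPt g)) ps) - 2 * S) := by
    have := hkey_time
    rw [hDtPt, hev, hzero] at this
    calc (0:ℝ) ≤ LPt g ps + (ps.1 - σ) *
          ((∑ j, Dv (eeS j) (Dv (eeS j) (LPt g)) ps) + 2 * 0 - 2 * S) := this
      _ = LPt g ps + (ps.1 - σ) * ((∑ j, Dv (eeS j) (Dv (eeS j) (LPt g)) ps) - 2 * S) := by ring
  have hmain2 : 0 ≤ LPt g ps - 2 * (ps.1 - σ) * S := by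
    have h4 : (ps.1 - σ) * (∑ j, Dv (eeS j) (Dv (eeS j) (LPt g)) ps) ≤ 0 :=
      mul_nonpos_of_nonneg_of_nonpos (le_of_lt hτpos) hΔ
    nlinarith [hmain]
  -- Cauchy-Schwarz chain
  have hSd : (∑ j, (Dv (eeS j) (LA g j) ps)^2) ≤ S := by
    rw [hSdef]
    apply Finset.sum_le_sum
    intro j _
    have : (Dv (eeS j) (LA g j) ps)^2 = Dv (eeS j) (LA g j) ps * Dv (eeS j) (LA g j) ps := sq _
    rw [this]
    exact Finset.single_le_sum
      (f := fun i => Dv (eeS j) (LA g i) ps * Dv (eeS j) (LA g i) ps)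
      (fun i _ => mul_self_nonneg _) (Finset.mem_univ j)
  have hCS : (∑ j, Dv (eeS j) (LA g j) ps)^2 ≤ (n:ℝ) * ∑ j, (Dv (eeS j) (LA g j) ps)^2 := by
    have := sq_sum_le_card_mul_sum_sq (s := Finset.univ)
      (f := fun j => Dv (eeS j) (LA g j) ps)
    simpa using this
  have hDelval : LDel g ps = ∑ j, Dv (eeS j) (LA g j) ps := rfl
  have hform := lemPtform hg hgpos hgheat ps hpsdom
  have ha2 : 0 ≤ ∑ i, (LA g i ps)^2 := Finset.sum_nonneg (fun i _ => sq_nonneg _)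
  have hMeq : (ps.1 - σ) * LPt g ps = M := by
    rw [hMdef, hQdef]
  have hLpos : 0 < LPt g ps := by
    rcases lt_trichotomy (LPt g ps) 0 with h | h | h
    · exfalso; nlinarith
    · exfalso; rw [hMdef, hQdef] at hMgt; simp only at hMgt; nlinarith
    · exact h
  -- final contradiction
  have h10 : LPt g ps ≤ -2 * LDel g ps := by linarith [hform, ha2]
  have h11 : LPt g ps * LPt g ps ≤ (-2 * LDel g ps) * (-2 * LDel g ps) :=
    mul_le_mul h10 h10 (le_of_lt hLpos) (by linarith)
  have h12 : (LDel g ps)^2 ≤ (n:ℝ) * S := by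
    rw [hDelval]
    calc (∑ j, Dv (eeS j) (LA g j) ps)^2 ≤ (n:ℝ) * ∑ j, (Dv (eeS j) (LA g j) ps)^2 := hCS
      _ ≤ (n:ℝ) * S := by
        apply mul_le_mul_of_nonneg_left hSd
        positivity
  have hnpos : (1:ℝ) ≤ (n:ℝ) := by exact_mod_cast hn
  nlinarith [hmain2, h11, h12, hMeq, hMgt, hτpos, hLpos, hnpos,
    mul_pos hτpos hLpos, sq_nonneg (LDel g ps), mul_le_mul_of_nonneg_left hmain2 (le_of_lt hLpos)]

include hgheat in
theorem master (hn : 1 ≤ n)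
    (hgper : ∀ p ∈ LYdom n, ∀ m : Fin n → ℤ, g (p.1, p.2 + fun i => (m i:ℝ)) = g p)
    {t0 : ℝ} (x0 : Fin n → ℝ) (ht0 : 0 < t0) :
    LPt g (t0, x0) ≤ 2 * n / t0 := by
  have H : ∀ σ : ℝ, 0 < σ → σ < t0 → (t0 - σ) * LPt g (t0, x0) ≤ 2 * n :=
    fun σ h1 h2 => claim_sigma hg hgpos hgheat hn hgper x0 h1 h2
  have key : t0 * LPt g (t0, x0) ≤ 2 * n := by
    by_contra hcon
    push_neg at hcon
    set L := LPt g (t0, x0) with hL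
    have hn2 : (2:ℝ) ≤ 2*n := by
      have : (1:ℝ) ≤ n := by exact_mod_cast hn
      linarith
    have hLpos : 0 < L := by nlinarith
    set σ := min (t0/2) ((t0 * L - 2*n)/(2*L)) with hσdef
    have hσpos : 0 < σ := by
      apply lt_min
      · linarith
      · apply div_pos
        · linarith
        · linarith
    have hσlt : σ < t0 := lt_of_le_of_lt (min_le_left _ _) (by linarith)
    have hσle : σ ≤ (t0 * L - 2*n)/(2*L) := min_le_right _ _
    have h3 := H σ hσpos hσlt
    have hLne : L ≠ 0 := ne_of_gt hLpos
    have h4 : σ * L ≤ (t0 * L - 2*n)/2 := by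
      calc σ * L ≤ ((t0 * L - 2*n)/(2*L)) * L := by
            exact mul_le_mul_of_nonneg_right hσle (le_of_lt hLpos)
        _ = (t0 * L - 2*n)/2 := by field_simp
    nlinarith
  rw [le_div_iff₀ ht0]
  linarith [key]

end main

section finalproof

set_option maxHeartbeats 1000000 in
/-- Proposition 1.4: the differential Harnack quantity `P = 2Δv − |∇v|² − 2n/t` is
nonpositive, where `v = −ln f − (n/2)ln(4πt)`. -/
theorem harnack_P_nonpos
    (n : ℕ) (hn : 1 ≤ n) (f : ℝ → (Fin n → ℝ) → ℝ)
    (hsmooth : ContDiffOn ℝ (⊤ : ℕ∞) (fun p : ℝ × (Fin n → ℝ) => f p.1 p.2)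
      (Set.Ioi 0 ×ˢ Set.univ))
    (hpos : ∀ t > (0:ℝ), ∀ x : Fin n → ℝ, 0 < f t x)
    (hheat : ∀ t > (0:ℝ), ∀ x : Fin n → ℝ, deriv (fun s => f s x) t = lap (f t) x)
    (hper : ∀ t > (0:ℝ), ∀ x : Fin n → ℝ, ∀ m : Fin n → ℤ,
      f t (x + fun i => (m i : ℝ)) = f t x)
    (v : ℝ → (Fin n → ℝ) → ℝ)
    (hv : ∀ t x, v t x = -Real.log (f t x) - (n / 2 : ℝ) * Real.log (4 * π * t))
    (P : ℝ → (Fin n → ℝ) → ℝ)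
    (hP : ∀ t x, P t x = 2 * lap (v t) x - gradSq (v t) x - 2 * n / t) :
    ∀ t > (0:ℝ), ∀ x : Fin n → ℝ, P t x ≤ 0 := by
  intro t ht x
  have hO : IsOpen (LYdom n) := LYdom_open
  set g : ℝ × (Fin n → ℝ) → ℝ := fun p => f p.1 p.2 with hgdef
  have hg : ContDiffOn ℝ (⊤:ℕ∞) g (LYdom n) := hsmooth
  have hgpos : ∀ p ∈ LYdom n, 0 < g p := fun p hp => hpos p.1 (mem_LYdom.mp hp) p.2
  have hgper : ∀ p ∈ LYdom n, ∀ m : Fin n → ℤ, g (p.1, p.2 + fun i => (m i:ℝ)) = g p :=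
    fun p hp m => hper p.1 (mem_LYdom.mp hp) p.2 m
  have bridge1 : ∀ (F : ℝ × (Fin n → ℝ) → ℝ), ContDiffOn ℝ (⊤:ℕ∞) F (LYdom n) →
      ∀ t' > (0:ℝ), ∀ x' : Fin n → ℝ, ∀ i,
        fderiv ℝ (fun y => F (t', y)) x' (Pi.single i 1) = Dv (eeS i) F (t', x') := by
    intro F hF t' ht' x' i
    exact slice_spatial (diffAt_of_smoothOn hO hF (mem_LYdom.mpr ht')) _
  have hgheat : ∀ p ∈ LYdom n, Dv (eeT n) g p = ∑ i, Dv (eeS i) (Dv (eeS i) g) p := by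
    intro p hp
    have htp : (0:ℝ) < p.1 := mem_LYdom.mp hp
    have h1 := hheat p.1 htp p.2
    have h2 : deriv (fun s => f s p.2) p.1 = Dv (eeT n) g p :=
      slice_time (diffAt_of_smoothOn hO hg hp)
    have h3 : lap (f p.1) p.2 = ∑ i, Dv (eeS i) (Dv (eeS i) g) p := by
      unfold lap
      refine Finset.sum_congr rfl (fun i _ => ?_)
      rw [show pd i (f p.1) = (fun y => Dv (eeS i) g (p.1, y)) from
        funext (fun y => bridge1 g hg p.1 htp y i)]
      exact bridge1 (Dv (eeS i) g) (Dv_smoothOn hO hg _) p.1 htp p.2 i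
    rw [← h2, h1, h3]
  have hmem : ((t, x) : ℝ × (Fin n → ℝ)) ∈ LYdom n := mem_LYdom.mpr ht
  have hpdv : ∀ i, ∀ y : Fin n → ℝ, pd i (v t) y = -(LA g i (t, y)) := by
    intro i y
    have hmemy : ((t, y) : ℝ × (Fin n → ℝ)) ∈ LYdom n := mem_LYdom.mpr ht
    have hWd : DifferentiableAt ℝ (fun y' => LW g (t, y')) y := by
      have h0 : DifferentiableAt ℝ (LW g) (t, y) :=
        diffAt_of_smoothOn hO (sW hg hgpos) hmemy
      exact h0.comp y (hasFDerivAt_prodMk_right t y).differentiableAt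
    have hvt : v t = fun y' => -(LW g (t, y')) - (n/2 : ℝ) * Real.log (4 * π * t) := by
      funext y'
      rw [hv t y']
      rfl
    rw [hvt]
    have hD : HasFDerivAt (fun y' => -(LW g (t, y')) - (n/2 : ℝ) * Real.log (4 * π * t))
        (-(fderiv ℝ (fun y' => LW g (t, y')) y)) y := (hWd.hasFDerivAt.neg).sub_const _
    unfold pd
    rw [hD.fderiv]
    have h5 : fderiv ℝ (fun y' => LW g (t, y')) y (Pi.single i 1) = LA g i (t, y) :=
      slice_spatial (diffAt_of_smoothOn hO (sW hg hgpos) hmemy) _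
    simp only [ContinuousLinearMap.neg_apply]
    rw [h5]
  have hgrad : gradSq (v t) x = ∑ i, (LA g i (t, x))^2 := by
    unfold gradSq
    exact Finset.sum_congr rfl (fun i _ => by rw [hpdv i x]; ring)
  have hlapv : lap (v t) x = -(LDel g (t, x)) := by
    unfold lap LDel
    rw [← Finset.sum_neg_distrib]
    refine Finset.sum_congr rfl (fun i _ => ?_)
    rw [show pd i (v t) = fun y => -(LA g i (t, y)) from funext (hpdv i)]
    have hAd : DifferentiableAt ℝ (fun y => LA g i (t, y)) x := by
      have h0 : DifferentiableAt ℝ (LA g i) (t, x) :=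
        diffAt_of_smoothOn hO (sA hg hgpos i) hmem
      exact h0.comp x (hasFDerivAt_prodMk_right t x).differentiableAt
    have hD2 : HasFDerivAt (fun y => -(LA g i (t, y)))
        (-(fderiv ℝ (fun y => LA g i (t, y)) x)) x := hAd.hasFDerivAt.neg
    unfold pd
    rw [hD2.fderiv]
    simp only [ContinuousLinearMap.neg_apply]
    have h6 : fderiv ℝ (fun y => LA g i (t, y)) x (Pi.single i 1) = Dv (eeS i) (LA g i) (t, x) :=
      slice_spatial (diffAt_of_smoothOn hO (sA hg hgpos i) hmem) _
    rw [h6]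
  have hmaster : LPt g (t, x) ≤ 2 * n / t := master hg hgpos hgheat hn hgper x ht
  have hform : LPt g (t, x) = (-2) * LDel g (t, x) - ∑ i, (LA g i (t, x))^2 :=
    lemPtform hg hgpos hgheat (t, x) hmem
  rw [hP t x, hgrad, hlapv]
  linarith [hmaster, hform]

end finalproof
end
end
end

section
/- Let n ≥ 1, let u : (0,∞) × ℝⁿ → ℝ be smooth and satisfy ∂u/∂t = Δu − |∇u|², and let α, β, b, c, λ be real constants with α ≠ 0. Define H = αΔu − β|∇u|² − b·u/t − c·n/t. Then H satisfies the evolution equation ∂H/∂t = ΔH − 2⟨∇H, ∇u⟩ − 2(α−β)|∇²u − (λ/(2t))I|² − (2(α−β)/α)(λ/t)H − (b + 2(α−β)βλ/α)|∇u|²/t + (1 − 2(α−β)λ/α)·b·u/t² + (1 − 2(α−β)λ/α)·c·n/t² + (α−β)nλ²/(2t²). -/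
open MeasureTheory Real

noncomputable section

section Aux

variable {n : ℕ}

/-- Symmetry of iterated directional derivatives for a function C^∞ at a point. -/
lemma fderiv_swap_at {E : Type*} [NormedAddCommGroup E] [NormedSpace ℝ E]
    {F : E → ℝ} {p : E} (hF : ContDiffAt ℝ (⊤ : ℕ∞) F p) (v w : E) :
    fderiv ℝ (fun q => fderiv ℝ F q v) p w = fderiv ℝ (fun q => fderiv ℝ F q w) p v := by
  have h2 : (2 : WithTop ℕ∞) ≤ ((⊤ : ℕ∞) : WithTop ℕ∞) := by norm_cast
  have hsymm := hF.isSymmSndFDerivAt (by rw [minSmoothness_of_isRCLikeNormedField]; exact h2)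
  have hd : DifferentiableAt ℝ (fderiv ℝ F) p := by
    have := hF.fderiv_right (m := ((⊤ : ℕ∞) : WithTop ℕ∞)) (by norm_cast)
    exact this.differentiableAt (by norm_cast)
  rw [fderiv_clm_apply hd (differentiableAt_const v),
      fderiv_clm_apply hd (differentiableAt_const w)]
  simp [hsymm v w]

lemma contDiff_pd {g : (Fin n → ℝ) → ℝ} (hg : ContDiff ℝ (⊤ : ℕ∞) g) (i : Fin n) :
    ContDiff ℝ (⊤ : ℕ∞) (pd i g) := by
  have : ContDiff ℝ (⊤ : ℕ∞) (fderiv ℝ g) :=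
    hg.fderiv_right (m := ((⊤ : ℕ∞) : WithTop ℕ∞)) (by norm_cast)
  exact this.clm_apply contDiff_const


lemma pd_congr {f g : (Fin n → ℝ) → ℝ} (h : ∀ y, f y = g y) (i : Fin n) (x : Fin n → ℝ) :
    pd i f x = pd i g x := by
  have : f = g := funext h
  rw [this]

lemma pd_add {f g : (Fin n → ℝ) → ℝ} {x : Fin n → ℝ} (hf : DifferentiableAt ℝ f x)
    (hg : DifferentiableAt ℝ g x) (i : Fin n) :
    pd i (fun y => f y + g y) x = pd i f x + pd i g x := by
  unfold pd; rw [fderiv_fun_add hf hg]; rfl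

lemma pd_sub {f g : (Fin n → ℝ) → ℝ} {x : Fin n → ℝ} (hf : DifferentiableAt ℝ f x)
    (hg : DifferentiableAt ℝ g x) (i : Fin n) :
    pd i (fun y => f y - g y) x = pd i f x - pd i g x := by
  unfold pd; rw [fderiv_fun_sub hf hg]; rfl

lemma pd_const (a : ℝ) (i : Fin n) (x : Fin n → ℝ) :
    pd i (fun _ => a) x = 0 := by
  unfold pd; rw [fderiv_fun_const]; rfl

lemma pd_const_mul {f : (Fin n → ℝ) → ℝ} {x : Fin n → ℝ} (hf : DifferentiableAt ℝ f x)
    (a : ℝ) (i : Fin n) :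
    pd i (fun y => a * f y) x = a * pd i f x := by
  unfold pd; rw [fderiv_const_mul hf]; rfl

lemma pd_div_const {f : (Fin n → ℝ) → ℝ} {x : Fin n → ℝ} (hf : DifferentiableAt ℝ f x)
    (a : ℝ) (i : Fin n) :
    pd i (fun y => f y / a) x = pd i f x / a := by
  have : (fun y => f y / a) = fun y => (1/a) * f y := by funext y; ring
  rw [pd_congr (fun y => by rw [congrFun this y]) i x, pd_const_mul hf]; ring

lemma pd_mul {f g : (Fin n → ℝ) → ℝ} {x : Fin n → ℝ} (hf : DifferentiableAt ℝ f x)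
    (hg : DifferentiableAt ℝ g x) (i : Fin n) :
    pd i (fun y => f y * g y) x = f x * pd i g x + g x * pd i f x := by
  unfold pd; rw [fderiv_fun_mul hf hg]; rfl

lemma pd_sum {ι : Type*} (s : Finset ι) {f : ι → (Fin n → ℝ) → ℝ} {x : Fin n → ℝ}
    (hf : ∀ j ∈ s, DifferentiableAt ℝ (f j) x) (i : Fin n) :
    pd i (fun y => ∑ j ∈ s, f j y) x = ∑ j ∈ s, pd i (f j) x := by
  unfold pd; rw [fderiv_fun_sum hf]; simp

lemma pd_sq {f : (Fin n → ℝ) → ℝ} {x : Fin n → ℝ} (hf : DifferentiableAt ℝ f x) (i : Fin n) :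
    pd i (fun y => f y ^ 2) x = 2 * f x * pd i f x := by
  have h := pd_mul hf hf i
  have : (fun y => f y ^ 2) = fun y => f y * f y := by funext y; ring
  rw [this, h]; ring

/-- Symmetry of the Hessian. -/
lemma hess_symm {g : (Fin n → ℝ) → ℝ} (hg : ContDiff ℝ (⊤ : ℕ∞) g) (i j : Fin n)
    (x : Fin n → ℝ) : hess i j g x = hess j i g x := by
  have : hess i j g x
      = fderiv ℝ (fun q => fderiv ℝ g q (Pi.single j 1)) x (Pi.single i 1) := rfl
  rw [this, fderiv_swap_at hg.contDiffAt]; rfl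

/-- slice lemma: spatial partial derivative of a slice of a function on ℝ × ℝⁿ. -/
lemma slice_pd {F : ℝ × (Fin n → ℝ) → ℝ} {t : ℝ} {x : Fin n → ℝ}
    (hF : DifferentiableAt ℝ F (t, x)) (i : Fin n) :
    pd i (fun y => F (t, y)) x = fderiv ℝ F (t, x) (0, Pi.single i 1) := by
  have h1 : HasFDerivAt (fun y : Fin n → ℝ => (t, y))
      ((0 : (Fin n → ℝ) →L[ℝ] ℝ).prod (ContinuousLinearMap.id ℝ (Fin n → ℝ))) x :=
    (hasFDerivAt_const t x).prodMk (hasFDerivAt_id x)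
  have h2 := (hF.hasFDerivAt.comp x h1)
  have h3 : pd i (fun y => F (t, y)) x
      = (((fderiv ℝ F (t, x)).comp
          ((0 : (Fin n → ℝ) →L[ℝ] ℝ).prod (ContinuousLinearMap.id ℝ (Fin n → ℝ)))))
          (Pi.single i 1) := by
    unfold pd; rw [show (fun y => F (t, y)) = F ∘ (fun y => (t, y)) from rfl, h2.fderiv]
  rw [h3]; rfl

/-- slice lemma: time derivative of a slice. -/
lemma slice_t {F : ℝ × (Fin n → ℝ) → ℝ} {t : ℝ} {x : Fin n → ℝ}
    (hF : DifferentiableAt ℝ F (t, x)) :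
    HasDerivAt (fun s => F (s, x)) (fderiv ℝ F (t, x) (1, 0)) t := by
  have h1 : HasDerivAt (fun s : ℝ => (s, x)) ((1 : ℝ), (0 : Fin n → ℝ)) t :=
    (hasDerivAt_id t).prodMk (hasDerivAt_const t x)
  exact hF.hasFDerivAt.comp_hasDerivAt t h1


lemma cd_diffAt {E : Type*} [NormedAddCommGroup E] [NormedSpace ℝ E] {g : E → ℝ}
    (hg : ContDiff ℝ (⊤ : ℕ∞) g) (y : E) : DifferentiableAt ℝ g y :=
  (hg.differentiable (by norm_cast)).differentiableAt

lemma contDiffOn_fderiv_apply {E : Type*} [NormedAddCommGroup E] [NormedSpace ℝ E]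
    {F : E → ℝ} {S : Set E} (hF : ContDiffOn ℝ (⊤ : ℕ∞) F S) (hS : IsOpen S) (v : E) :
    ContDiffOn ℝ (⊤ : ℕ∞) (fun p => fderiv ℝ F p v) S :=
  (hF.fderiv_of_isOpen hS (m := ((⊤ : ℕ∞) : WithTop ℕ∞)) (by norm_cast)).clm_apply
    contDiffOn_const

lemma contDiff_sum_pd {n : ℕ} {g : Fin n → (Fin n → ℝ) → ℝ}
    (hg : ∀ i, ContDiff ℝ (⊤ : ℕ∞) (g i)) :
    ContDiff ℝ (⊤ : ℕ∞) (fun y => ∑ i, g i y) :=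
  ContDiff.sum fun i _ => hg i

end Aux

/-- Lemma 2.1: general evolution equation for `H = αΔu − β|∇u|² − b·u/t − c·n/t` when
`∂u/∂t = Δu − |∇u|²` on flat space. -/
theorem evolution_H_general
    (n : ℕ) (hn : 1 ≤ n) (u : ℝ → (Fin n → ℝ) → ℝ)
    (hsmooth : ContDiffOn ℝ (⊤ : ℕ∞) (fun p : ℝ × (Fin n → ℝ) => u p.1 p.2)
      (Set.Ioi 0 ×ˢ Set.univ))
    (heq : ∀ t > (0:ℝ), ∀ x : Fin n → ℝ,
      deriv (fun s => u s x) t = lap (u t) x - gradSq (u t) x)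
    (α β b c l : ℝ) (hα : α ≠ 0)
    (H : ℝ → (Fin n → ℝ) → ℝ)
    (hH : ∀ t x, H t x = α * lap (u t) x - β * gradSq (u t) x - b * u t x / t - c * n / t) :
    ∀ t > (0:ℝ), ∀ x : Fin n → ℝ,
      deriv (fun s => H s x) t =
        lap (H t) x - 2 * (∑ i, pd i (H t) x * pd i (u t) x)
        - 2 * (α - β) *
            (∑ i, ∑ j, (hess i j (u t) x - (l / (2 * t)) * (if i = j then (1:ℝ) else 0)) ^ 2)
        - (2 * (α - β) / α) * (l / t) * H t x
        - (b + 2 * (α - β) * β * l / α) * (gradSq (u t) x / t)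
        + (1 - 2 * (α - β) * l / α) * (b * u t x / t ^ 2)
        + (1 - 2 * (α - β) * l / α) * (c * n / t ^ 2)
        + (α - β) * n * l ^ 2 / (2 * t ^ 2) := by
  intro t ht x
  have hS : IsOpen (Set.Ioi (0:ℝ) ×ˢ (Set.univ : Set (Fin n → ℝ))) :=
    isOpen_Ioi.prod isOpen_univ
  set S : Set (ℝ × (Fin n → ℝ)) := Set.Ioi (0:ℝ) ×ˢ (Set.univ : Set (Fin n → ℝ)) with hSdef
  set f : ℝ × (Fin n → ℝ) → ℝ := fun p => u p.1 p.2 with hfdef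
  have hfS : ContDiffOn ℝ (⊤:ℕ∞) f S := hsmooth
  have hmem : ∀ {s : ℝ}, 0 < s → ∀ (y : Fin n → ℝ), (s, y) ∈ S := fun hs y => ⟨hs, trivial⟩
  -- differentiability of smooth-on-S functions at points of S
  have hdiff : ∀ {G : ℝ × (Fin n → ℝ) → ℝ}, ContDiffOn ℝ (⊤:ℕ∞) G S →
      ∀ {s : ℝ}, 0 < s → ∀ (y : Fin n → ℝ), DifferentiableAt ℝ G (s, y) := by
    intro G hG s hs y
    exact ((hG.contDiffAt (hS.mem_nhds (hmem hs y))).differentiableAt (by norm_cast))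
  -- smoothness of the time slices
  have hslice : ∀ {s : ℝ}, 0 < s → ContDiff ℝ (⊤:ℕ∞) (u s) := by
    intro s hs
    rw [contDiff_iff_contDiffAt]
    intro y
    have h1 : ContDiffAt ℝ (⊤:ℕ∞) f (s, y) := hfS.contDiffAt (hS.mem_nhds (hmem hs y))
    have h2 : ContDiff ℝ (⊤:ℕ∞) (fun y' : Fin n → ℝ => ((s : ℝ), y')) :=
      contDiff_const.prodMk contDiff_id
    exact h1.comp y h2.contDiffAt
  -- directional-derivative functions on the product space
  set e0 : ℝ × (Fin n → ℝ) := ((1:ℝ), (0 : Fin n → ℝ)) with he0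
  set ev : Fin n → ℝ × (Fin n → ℝ) := fun i => ((0:ℝ), Pi.single i 1) with hev
  set F0 : ℝ × (Fin n → ℝ) → ℝ := fun p => fderiv ℝ f p e0 with hF0def
  set Fv : Fin n → ℝ × (Fin n → ℝ) → ℝ := fun i p => fderiv ℝ f p (ev i) with hFvdef
  have hF0 : ContDiffOn ℝ (⊤:ℕ∞) F0 S := contDiffOn_fderiv_apply hfS hS e0
  have hFv : ∀ i, ContDiffOn ℝ (⊤:ℕ∞) (Fv i) S := fun i => contDiffOn_fderiv_apply hfS hS (ev i)
  -- spatial partials of slices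
  have hpd : ∀ {s : ℝ}, 0 < s → ∀ (i : Fin n) (y : Fin n → ℝ),
      pd i (u s) y = Fv i (s, y) := by
    intro s hs i y
    exact slice_pd (hdiff hfS hs y) i
  have hhessf : ∀ {s : ℝ}, 0 < s → ∀ (i j : Fin n) (y : Fin n → ℝ),
      hess i j (u s) y = fderiv ℝ (Fv j) (s, y) (ev i) := by
    intro s hs i j y
    have h1 : pd j (u s) = fun z => Fv j (s, z) := funext fun z => hpd hs j z
    have : hess i j (u s) y = pd i (fun z => Fv j (s, z)) y := by
      unfold hess; rw [h1]
    rw [this]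
    exact slice_pd (hdiff (hFv j) hs y) i
  -- time derivative of u
  have hderiv_u : ∀ {s : ℝ}, 0 < s → ∀ (y : Fin n → ℝ),
      HasDerivAt (fun s' => u s' y) (F0 (s, y)) s := by
    intro s hs y
    exact slice_t (hdiff hfS hs y)
  -- the function W = ∂u/∂t at time t
  set W : (Fin n → ℝ) → ℝ := fun y => F0 (t, y) with hWdef
  have hpdW : ∀ (i : Fin n) (y : Fin n → ℝ),
      pd i W y = fderiv ℝ F0 (t, y) (ev i) := fun i y => slice_pd (hdiff hF0 ht y) i
  have hWval : ∀ y, W y = lap (u t) y - gradSq (u t) y := by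
    intro y
    exact ((hderiv_u ht y).deriv.symm.trans (heq t ht y))
  -- time derivative of the spatial partials
  have hD1 : ∀ (i : Fin n), HasDerivAt (fun s => pd i (u s) x) (pd i W x) t := by
    intro i
    have ha : HasDerivAt (fun s => Fv i (s, x)) (fderiv ℝ (Fv i) (t, x) e0) t :=
      slice_t (hdiff (hFv i) ht x)
    have hb : (fun s => pd i (u s) x) =ᶠ[nhds t] (fun s => Fv i (s, x)) := by
      filter_upwards [eventually_gt_nhds ht] with s hs using hpd hs i x
    have hc : HasDerivAt (fun s => pd i (u s) x) (fderiv ℝ (Fv i) (t, x) e0) t :=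
      ha.congr_of_eventuallyEq hb
    have hval : fderiv ℝ (Fv i) (t, x) e0 = pd i W x := by
      rw [hpdW i x]
      exact fderiv_swap_at (hfS.contDiffAt (hS.mem_nhds (hmem ht x))) (ev i) e0
    rwa [hval] at hc
  -- time derivative of the diagonal Hessian entries
  have hD2 : ∀ (i : Fin n), HasDerivAt (fun s => hess i i (u s) x) (hess i i W x) t := by
    intro i
    set Gi : ℝ × (Fin n → ℝ) → ℝ := fun p => fderiv ℝ (Fv i) p (ev i) with hGidef
    have hGi : ContDiffOn ℝ (⊤:ℕ∞) Gi S := contDiffOn_fderiv_apply (hFv i) hS (ev i)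
    have ha : HasDerivAt (fun s => Gi (s, x)) (fderiv ℝ Gi (t, x) e0) t :=
      slice_t (hdiff hGi ht x)
    have hb : (fun s => hess i i (u s) x) =ᶠ[nhds t] (fun s => Gi (s, x)) := by
      filter_upwards [eventually_gt_nhds ht] with s hs using hhessf hs i i x
    have hc : HasDerivAt (fun s => hess i i (u s) x) (fderiv ℝ Gi (t, x) e0) t :=
      ha.congr_of_eventuallyEq hb
    -- identify the derivative value
    have h1 : fderiv ℝ Gi (t, x) e0
        = fderiv ℝ (fun q => fderiv ℝ (Fv i) q e0) (t, x) (ev i) :=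
      fderiv_swap_at ((hFv i).contDiffAt (hS.mem_nhds (hmem ht x))) (ev i) e0
    have hEE : (fun q => fderiv ℝ (Fv i) q e0) =ᶠ[nhds (t, x)]
        (fun q => fderiv ℝ F0 q (ev i)) := by
      filter_upwards [hS.mem_nhds (hmem ht x)] with q hq
      exact fderiv_swap_at (hfS.contDiffAt (hS.mem_nhds hq)) (ev i) e0
    have h2 : fderiv ℝ (fun q => fderiv ℝ (Fv i) q e0) (t, x)
        = fderiv ℝ (fun q => fderiv ℝ F0 q (ev i)) (t, x) := hEE.fderiv_eq
    have h3 : hess i i W x = fderiv ℝ (fun q => fderiv ℝ F0 q (ev i)) (t, x) (ev i) := by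
      have hw : pd i W = fun y => (fun q => fderiv ℝ F0 q (ev i)) (t, y) :=
        funext fun y => hpdW i y
      have : hess i i W x = pd i (fun y => (fun q => fderiv ℝ F0 q (ev i)) (t, y)) x := by
        unfold hess; rw [hw]
      rw [this]
      exact slice_pd (hdiff (contDiffOn_fderiv_apply hF0 hS (ev i)) ht x) i
    rw [h1, h2, ← h3] at hc
    exact hc
  -- time derivative of the Laplacian
  have hD3 : HasDerivAt (fun s => lap (u s) x) (lap W x) t := by
    have : HasDerivAt (fun s => ∑ i, hess i i (u s) x) (∑ i, hess i i W x) t :=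
      HasDerivAt.fun_sum fun i _ => hD2 i
    exact this
  -- time derivative of the gradient square
  have hD4 : HasDerivAt (fun s => gradSq (u s) x)
      (∑ i, 2 * pd i (u t) x * pd i W x) t := by
    have : HasDerivAt (fun s => ∑ i, (pd i (u s) x) ^ 2)
        (∑ i, (2:ℕ) * (pd i (u t) x) ^ (2-1) * pd i W x) t :=
      HasDerivAt.fun_sum fun i _ => (hD1 i).pow 2
    simpa [gradSq] using this
  -- time derivative of H
  have hHfun : (fun s => H s x) = fun s =>
      α * lap (u s) x - β * gradSq (u s) x - b * u s x / s - c * n / s :=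
    funext fun s => hH s x
  have hD5 : HasDerivAt (fun s => H s x)
      (α * lap W x - β * (∑ i, 2 * pd i (u t) x * pd i W x)
        - (b * W x * t - b * u t x * 1) / t ^ 2 - (0 * t - c * n * 1) / t ^ 2) t := by
    rw [hHfun]
    exact ((((hD3.const_mul α).sub (hD4.const_mul β)).sub
      (((hderiv_u ht x).const_mul b).div (hasDerivAt_id t) ht.ne')).sub
      ((hasDerivAt_const t (c * (n:ℝ))).div (hasDerivAt_id t) ht.ne'))
  -- spatial smoothness facts at time t
  have hut : ContDiff ℝ (⊤:ℕ∞) (u t) := hslice ht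
  have hpdj : ∀ j, ContDiff ℝ (⊤:ℕ∞) (pd j (u t)) := fun j => contDiff_pd hut j
  have hhessij : ∀ i j, ContDiff ℝ (⊤:ℕ∞) (hess i j (u t)) := fun i j =>
    contDiff_pd (hpdj j) i
  have hlapu : ContDiff ℝ (⊤:ℕ∞) (lap (u t)) :=
    contDiff_sum_pd (fun i => contDiff_pd (hpdj i) i)
  have hgsu : ContDiff ℝ (⊤:ℕ∞) (gradSq (u t)) :=
    ContDiff.sum fun i _ => (hpdj i).pow 2
  -- spatial derivatives of W
  have hWfun : W = fun z => lap (u t) z - gradSq (u t) z := funext hWval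
  have hpdW2 : ∀ (i : Fin n) (y : Fin n → ℝ),
      pd i W y = pd i (lap (u t)) y - pd i (gradSq (u t)) y := by
    intro i y
    rw [hWfun]
    exact pd_sub (cd_diffAt hlapu y) (cd_diffAt hgsu y) i
  have hlapW : lap W x = lap (lap (u t)) x - lap (gradSq (u t)) x := by
    have h1 : ∀ i : Fin n, pd i (pd i W) x
        = pd i (pd i (lap (u t))) x - pd i (pd i (gradSq (u t))) x := by
      intro i
      have hfn : pd i W = fun y => pd i (lap (u t)) y - pd i (gradSq (u t)) y :=
        funext (hpdW2 i)
      rw [hfn]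
      exact pd_sub (cd_diffAt (contDiff_pd hlapu i) x)
        (cd_diffAt (contDiff_pd hgsu i) x) i
    have h2 : lap W x = ∑ i, (pd i (pd i (lap (u t))) x - pd i (pd i (gradSq (u t))) x) :=
      Finset.sum_congr rfl fun i _ => h1 i
    rw [h2, Finset.sum_sub_distrib]
    rfl
  -- spatial derivatives of H t
  have hHtfun : H t = fun z =>
      α * lap (u t) z - β * gradSq (u t) z - b * u t z / t - c * n / t :=
    funext fun z => hH t z
  have hpdHt : ∀ (i : Fin n) (y : Fin n → ℝ), pd i (H t) y
      = α * pd i (lap (u t)) y - β * pd i (gradSq (u t)) y - b * pd i (u t) y / t := by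
    intro i y
    have d1 : DifferentiableAt ℝ (fun z => α * lap (u t) z) y :=
      (cd_diffAt hlapu y).const_mul α
    have d2 : DifferentiableAt ℝ (fun z => β * gradSq (u t) z) y :=
      (cd_diffAt hgsu y).const_mul β
    have d3 : DifferentiableAt ℝ (fun z => b * u t z / t) y :=
      by
      simpa only [div_eq_mul_inv] using ((cd_diffAt hut y).const_mul b).mul_const t⁻¹
    rw [hHtfun, pd_sub ((d1.fun_sub d2).fun_sub d3) (differentiableAt_const _) i,
      pd_sub (d1.fun_sub d2) d3 i, pd_sub d1 d2 i, pd_const,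
      pd_const_mul (cd_diffAt hlapu y) α i, pd_const_mul (cd_diffAt hgsu y) β i,
      pd_div_const ((cd_diffAt hut y).const_mul b) t i,
      pd_const_mul (cd_diffAt hut y) b i]
    ring
  have hlapHt : lap (H t) x
      = α * lap (lap (u t)) x - β * lap (gradSq (u t)) x - b * lap (u t) x / t := by
    have h1 : ∀ i : Fin n, pd i (pd i (H t)) x
        = α * pd i (pd i (lap (u t))) x - β * pd i (pd i (gradSq (u t))) x
          - b * pd i (pd i (u t)) x / t := by
      intro i
      have hfn : pd i (H t) = fun y =>
          α * pd i (lap (u t)) y - β * pd i (gradSq (u t)) y - b * pd i (u t) y / t :=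
        funext (hpdHt i)
      have d1 : DifferentiableAt ℝ (fun z => α * pd i (lap (u t)) z) x :=
        (cd_diffAt (contDiff_pd hlapu i) x).const_mul α
      have d2 : DifferentiableAt ℝ (fun z => β * pd i (gradSq (u t)) z) x :=
        (cd_diffAt (contDiff_pd hgsu i) x).const_mul β
      have d3 : DifferentiableAt ℝ (fun z => b * pd i (u t) z / t) x :=
        by
        simpa only [div_eq_mul_inv] using ((cd_diffAt (hpdj i) x).const_mul b).mul_const t⁻¹
      rw [hfn, pd_sub (d1.fun_sub d2) d3 i, pd_sub d1 d2 i,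
        pd_const_mul (cd_diffAt (contDiff_pd hlapu i) x) α i,
        pd_const_mul (cd_diffAt (contDiff_pd hgsu i) x) β i,
        pd_div_const ((cd_diffAt (hpdj i) x).const_mul b) t i,
        pd_const_mul (cd_diffAt (hpdj i) x) b i]
    have h2 : lap (H t) x = ∑ i, (α * pd i (pd i (lap (u t))) x
        - β * pd i (pd i (gradSq (u t))) x - b * pd i (pd i (u t)) x / t) :=
      Finset.sum_congr rfl fun i _ => h1 i
    rw [h2, Finset.sum_sub_distrib, Finset.sum_sub_distrib, ← Finset.mul_sum,
      ← Finset.mul_sum, ← Finset.sum_div, ← Finset.mul_sum]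
    rfl
  -- derivative of the gradient square in space
  have hpdgs_eq : ∀ (i : Fin n) (y : Fin n → ℝ),
      pd i (gradSq (u t)) y = ∑ j, 2 * pd j (u t) y * hess i j (u t) y := by
    intro i y
    have h0 : gradSq (u t) = fun z => ∑ j, (pd j (u t) z) ^ 2 := rfl
    rw [h0, pd_sum Finset.univ (fun j _ => (cd_diffAt (hpdj j) y).fun_pow 2) i]
    refine Finset.sum_congr rfl fun j _ => ?_
    rw [pd_sq (cd_diffAt (hpdj j) y) i]
    rfl
  -- third-derivative commutation
  have hthird : ∀ (i j : Fin n), pd i (hess i j (u t)) x = pd j (hess i i (u t)) x := by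
    intro i j
    have h1 : hess i j (u t) = fun z => pd j (pd i (u t)) z :=
      funext fun z => hess_symm hut i j z
    rw [h1]
    have h2 : pd i (fun z => pd j (pd i (u t)) z) x = hess i j (pd i (u t)) x := rfl
    rw [h2, hess_symm (hpdj i) i j x]
    rfl
  have hpdlap_eq : ∀ j : Fin n, pd j (lap (u t)) x = ∑ i, pd j (hess i i (u t)) x := by
    intro j
    have h0 : lap (u t) = fun z => ∑ i, hess i i (u t) z := rfl
    rw [h0, pd_sum Finset.univ (fun i _ => cd_diffAt (hhessij i i) x) j]
  -- Bochner formula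
  have hBochner : lap (gradSq (u t)) x
      = 2 * (∑ i, ∑ j, (hess i j (u t) x) ^ 2)
        + 2 * (∑ j, pd j (u t) x * pd j (lap (u t)) x) := by
    have h1 : ∀ i : Fin n, pd i (pd i (gradSq (u t))) x
        = ∑ j, (2 * (hess i j (u t) x) ^ 2
            + 2 * (pd j (u t) x * pd i (hess i j (u t)) x)) := by
      intro i
      have hfn : pd i (gradSq (u t)) = fun y => ∑ j, 2 * pd j (u t) y * hess i j (u t) y :=
        funext (hpdgs_eq i)
      have dj : ∀ j : Fin n, DifferentiableAt ℝ
          (fun y => 2 * pd j (u t) y * hess i j (u t) y) x :=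
        fun j => ((cd_diffAt (hpdj j) x).const_mul 2).mul (cd_diffAt (hhessij i j) x)
      rw [hfn, pd_sum Finset.univ (fun j _ => dj j) i]
      refine Finset.sum_congr rfl fun j _ => ?_
      have e1 : pd i (fun y => 2 * pd j (u t) y * hess i j (u t) y) x
          = pd i (fun y => 2 * (pd j (u t) y * hess i j (u t) y)) x :=
        pd_congr (fun y => by ring) i x
      rw [e1, pd_const_mul ((cd_diffAt (hpdj j) x).fun_mul (cd_diffAt (hhessij i j) x)) 2 i,
        pd_mul (cd_diffAt (hpdj j) x) (cd_diffAt (hhessij i j) x) i]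
      have e2 : pd i (pd j (u t)) x = hess i j (u t) x := rfl
      rw [e2]; ring
    have h2 : lap (gradSq (u t)) x = ∑ i, ∑ j, (2 * (hess i j (u t) x) ^ 2
        + 2 * (pd j (u t) x * pd i (hess i j (u t)) x)) :=
      Finset.sum_congr rfl fun i _ => h1 i
    have h3 : ∑ i : Fin n, ∑ j : Fin n, 2 * (pd j (u t) x * pd i (hess i j (u t)) x)
        = 2 * ∑ j, pd j (u t) x * pd j (lap (u t)) x := by
      rw [Finset.sum_comm, Finset.mul_sum]
      refine Finset.sum_congr rfl fun j _ => ?_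
      calc ∑ i, 2 * (pd j (u t) x * pd i (hess i j (u t)) x)
          = ∑ i, 2 * (pd j (u t) x * pd j (hess i i (u t)) x) :=
            Finset.sum_congr rfl fun i _ => by rw [hthird i j]
        _ = 2 * (pd j (u t) x * ∑ i, pd j (hess i i (u t)) x) := by
            rw [Finset.mul_sum, Finset.mul_sum]
        _ = 2 * (pd j (u t) x * pd j (lap (u t)) x) := by rw [← hpdlap_eq j]
    rw [h2]
    simp only [Finset.sum_add_distrib]
    rw [h3]
    congr 1
    simp [Finset.mul_sum]
  -- inner product of ∇H with ∇u
  have hgradH : ∑ i, pd i (H t) x * pd i (u t) x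
      = α * (∑ j, pd j (u t) x * pd j (lap (u t)) x)
        - β * (∑ j, pd j (u t) x * pd j (gradSq (u t)) x)
        - b * gradSq (u t) x / t := by
    have h1 : ∑ i, pd i (H t) x * pd i (u t) x
        = ∑ i, (α * (pd i (u t) x * pd i (lap (u t)) x)
            - β * (pd i (u t) x * pd i (gradSq (u t)) x)
            - b * (pd i (u t) x) ^ 2 / t) :=
      Finset.sum_congr rfl fun i _ => by rw [hpdHt i x]; ring
    rw [h1, Finset.sum_sub_distrib, Finset.sum_sub_distrib, ← Finset.mul_sum,
      ← Finset.mul_sum, ← Finset.sum_div, ← Finset.mul_sum]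
    rfl
  -- the sum appearing in the time derivative
  have hsumW : ∑ i, 2 * pd i (u t) x * pd i W x
      = 2 * (∑ j, pd j (u t) x * pd j (lap (u t)) x)
        - 2 * (∑ j, pd j (u t) x * pd j (gradSq (u t)) x) := by
    have h1 : ∑ i, 2 * pd i (u t) x * pd i W x
        = ∑ i, (2 * (pd i (u t) x * pd i (lap (u t)) x)
            - 2 * (pd i (u t) x * pd i (gradSq (u t)) x)) :=
      Finset.sum_congr rfl fun i _ => by rw [hpdW2 i x]; ring
    rw [h1, Finset.sum_sub_distrib, ← Finset.mul_sum, ← Finset.mul_sum]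
  -- expansion of the Frobenius norm term
  have hFrob : ∑ i, ∑ j,
        (hess i j (u t) x - (l / (2 * t)) * (if i = j then (1:ℝ) else 0)) ^ 2
      = (∑ i, ∑ j, (hess i j (u t) x) ^ 2) - 2 * (l / (2 * t)) * lap (u t) x
        + n * (l / (2 * t)) ^ 2 := by
    have h1 : ∀ i j : Fin n,
        (hess i j (u t) x - (l / (2 * t)) * (if i = j then (1:ℝ) else 0)) ^ 2
        = (hess i j (u t) x) ^ 2
          + (if i = j then ((l / (2 * t)) ^ 2 - 2 * (l / (2 * t)) * hess i j (u t) x)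
             else 0) := by
      intro i j
      by_cases h : i = j <;> simp [h] <;> ring
    have h2 : ∀ i : Fin n, ∑ j,
        (hess i j (u t) x - (l / (2 * t)) * (if i = j then (1:ℝ) else 0)) ^ 2
        = (∑ j, (hess i j (u t) x) ^ 2)
          + ((l / (2 * t)) ^ 2 - 2 * (l / (2 * t)) * hess i i (u t) x) := by
      intro i
      rw [Finset.sum_congr rfl fun j _ => h1 i j, Finset.sum_add_distrib,
        Finset.sum_ite_eq]
      simp
    rw [Finset.sum_congr rfl fun i _ => h2 i, Finset.sum_add_distrib,
      Finset.sum_sub_distrib]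
    have h3 : ∑ i : Fin n, hess i i (u t) x = lap (u t) x := rfl
    rw [← Finset.mul_sum, h3]
    simp [Finset.sum_const, Finset.card_univ]
    ring
  -- final assembly
  have hfinal := hD5.deriv
  rw [hfinal, hlapW, hsumW, hWval x, hlapHt, hgradH, hFrob, hBochner, hH t x]
  field_simp
  ring
end
end

section
/- Let n ≥ 1 and let u : (0,∞) × ℝⁿ → ℝ be smooth and satisfy ∂u/∂t = Δu − |∇u|². Define H = 2Δu − |∇u|² − 2n/t. Then H satisfies the evolution equation ∂H/∂t = ΔH − 2⟨∇H, ∇u⟩ − 2|∇²u − (1/t)I|² − 2H/t − 2|∇u|²/t. -/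
open MeasureTheory Real

noncomputable section

namespace EvoAux

variable {n : ℕ}

/-- The parabolic domain `(0,∞) × ℝⁿ`. -/
def Om (n : ℕ) : Set (ℝ × (Fin n → ℝ)) := Set.Ioi 0 ×ˢ Set.univ

lemma isOpen_Om : IsOpen (Om n) := isOpen_Ioi.prod isOpen_univ

lemma mem_Om {t : ℝ} (ht : 0 < t) (x : Fin n → ℝ) : (t, x) ∈ Om n := ⟨ht, trivial⟩

/-- Directional derivative in direction `v`. -/
def Dd (v : ℝ × (Fin n → ℝ)) (g : ℝ × (Fin n → ℝ) → ℝ) (q : ℝ × (Fin n → ℝ)) : ℝ :=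
  fderiv ℝ g q v

lemma diffAt {F : Type*} [NormedAddCommGroup F] [NormedSpace ℝ F]
    {g : ℝ × (Fin n → ℝ) → F} (hg : ContDiffOn ℝ (⊤ : ℕ∞) g (Om n))
    {q} (hq : q ∈ Om n) : DifferentiableAt ℝ g q :=
  (hg.contDiffAt (isOpen_Om.mem_nhds hq)).differentiableAt (by simp)

lemma fderiv_smoothOn {F : Type*} [NormedAddCommGroup F] [NormedSpace ℝ F]
    {g : ℝ × (Fin n → ℝ) → F} (hg : ContDiffOn ℝ (⊤ : ℕ∞) g (Om n)) :
    ContDiffOn ℝ (⊤ : ℕ∞) (fderiv ℝ g) (Om n) :=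
  hg.fderiv_of_isOpen isOpen_Om (by simp)

lemma Dd_smooth {g : ℝ × (Fin n → ℝ) → ℝ} (hg : ContDiffOn ℝ (⊤ : ℕ∞) g (Om n))
    (v : ℝ × (Fin n → ℝ)) : ContDiffOn ℝ (⊤ : ℕ∞) (Dd v g) (Om n) :=
  (fderiv_smoothOn hg).clm_apply contDiffOn_const

lemma Dd_comm {g : ℝ × (Fin n → ℝ) → ℝ} (hg : ContDiffOn ℝ (⊤ : ℕ∞) g (Om n))
    {q} (hq : q ∈ Om n) (v w : ℝ × (Fin n → ℝ)) :
    Dd v (Dd w g) q = Dd w (Dd v g) q := by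
  have hsym : IsSymmSndFDerivAt ℝ g q :=
    (hg.contDiffAt (isOpen_Om.mem_nhds hq)).isSymmSndFDerivAt
      (by rw [minSmoothness_of_isRCLikeNormedField]; exact WithTop.coe_le_coe.mpr le_top)
  have hd : DifferentiableAt ℝ (fderiv ℝ g) q := diffAt (fderiv_smoothOn hg) hq
  have key : ∀ a b : ℝ × (Fin n → ℝ),
      Dd a (Dd b g) q = fderiv ℝ (fderiv ℝ g) q a b := by
    intro a b
    have : Dd a (Dd b g) q
        = fderiv ℝ (fun y => (fderiv ℝ g y) b) q a := rfl
    rw [this, fderiv_clm_apply hd (differentiableAt_const b)]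
    simp
  rw [key, key, hsym v w]

lemma Dd_congr {f g : ℝ × (Fin n → ℝ) → ℝ} (h : ∀ q ∈ Om n, f q = g q)
    {q} (hq : q ∈ Om n) (v : ℝ × (Fin n → ℝ)) : Dd v f q = Dd v g q := by
  unfold Dd
  rw [Filter.EventuallyEq.fderiv_eq ?_]
  filter_upwards [isOpen_Om.mem_nhds hq] with y hy using h y hy

lemma Dd_sub {f g : ℝ × (Fin n → ℝ) → ℝ} {q v} (hf : DifferentiableAt ℝ f q)
    (hg : DifferentiableAt ℝ g q) :
    Dd v (fun q => f q - g q) q = Dd v f q - Dd v g q := by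
  unfold Dd; rw [fderiv_fun_sub hf hg]; simp

lemma Dd_sub_const {g : ℝ × (Fin n → ℝ) → ℝ} {q v} (c : ℝ) :
    Dd v (fun q => g q - c) q = Dd v g q := by
  unfold Dd; rw [fderiv_sub_const]

lemma Dd_mul {f g : ℝ × (Fin n → ℝ) → ℝ} {q v} (hf : DifferentiableAt ℝ f q)
    (hg : DifferentiableAt ℝ g q) :
    Dd v (fun q => f q * g q) q = f q * Dd v g q + Dd v f q * g q := by
  unfold Dd; rw [fderiv_fun_mul hf hg]; simp [mul_comm]

lemma Dd_const_mul {f : ℝ × (Fin n → ℝ) → ℝ} {q v} (hf : DifferentiableAt ℝ f q) (c : ℝ) :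
    Dd v (fun q => c * f q) q = c * Dd v f q := by
  unfold Dd; rw [fderiv_const_mul hf c]; simp

lemma Dd_sum {ι : Type*} {s : Finset ι} {f : ι → ℝ × (Fin n → ℝ) → ℝ} {q v}
    (hf : ∀ i ∈ s, DifferentiableAt ℝ (f i) q) :
    Dd v (fun q => ∑ i ∈ s, f i q) q = ∑ i ∈ s, Dd v (f i) q := by
  unfold Dd; rw [fderiv_fun_sum hf]; simp

lemma Dd_sq {f : ℝ × (Fin n → ℝ) → ℝ} {q v} (hf : DifferentiableAt ℝ f q) :
    Dd v (fun q => (f q) ^ 2) q = 2 * f q * Dd v f q := by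
  have := Dd_mul (v := v) hf hf
  have h2 : (fun q => (f q) ^ 2) = fun q => f q * f q := by funext y; ring
  rw [h2, this]; ring

lemma hasDerivAt_slice {g : ℝ × (Fin n → ℝ) → ℝ} (hg : ContDiffOn ℝ (⊤ : ℕ∞) g (Om n))
    {t : ℝ} (ht : 0 < t) (x : Fin n → ℝ) :
    HasDerivAt (fun s => g (s, x)) (Dd (1, 0) g (t, x)) t := by
  have h1 : HasDerivAt (fun s : ℝ => ((s, x) : ℝ × (Fin n → ℝ))) ((1 : ℝ), (0 : Fin n → ℝ)) t :=
    (hasDerivAt_id t).prodMk (hasDerivAt_const t x)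
  exact (diffAt hg (mem_Om ht x)).hasFDerivAt.comp_hasDerivAt t h1

lemma pd_slice {g : ℝ × (Fin n → ℝ) → ℝ} (hg : ContDiffOn ℝ (⊤ : ℕ∞) g (Om n))
    {t : ℝ} (ht : 0 < t) (i : Fin n) (x : Fin n → ℝ) :
    pd i (fun y => g (t, y)) x = Dd (0, Pi.single i 1) g (t, x) := by
  have h1 : HasFDerivAt (fun y : Fin n → ℝ => ((t, y) : ℝ × (Fin n → ℝ)))
      ((0 : (Fin n → ℝ) →L[ℝ] ℝ).prod (ContinuousLinearMap.id ℝ (Fin n → ℝ))) x :=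
    (hasFDerivAt_const t x).prodMk (hasFDerivAt_id x)
  have h2 := (diffAt hg (mem_Om ht x)).hasFDerivAt.comp x h1
  unfold pd
  have h3 : HasFDerivAt (fun y => g (t, y))
      ((fderiv ℝ g (t, x)).comp
        ((0 : (Fin n → ℝ) →L[ℝ] ℝ).prod (ContinuousLinearMap.id ℝ (Fin n → ℝ)))) x := h2
  rw [h3.fderiv]
  rfl

lemma algebra_key (n : ℕ) {t : ℝ} (ht : t ≠ 0) (a : Fin n → ℝ)
    (b c d e : Fin n → Fin n → ℝ)
    (hd : ∀ i j, d j i = c i j) :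
    2 * (∑ i, ((∑ j, e i j) - ∑ j, 2 * (b i j * b i j + a j * d i j)))
      - (∑ i, 2 * a i * ((∑ j, c i j) - ∑ j, 2 * a j * b i j)) + 2 * n / t ^ 2
    = (∑ i, (2 * (∑ j, e i j) - ∑ j, 2 * (b i j * b i j + a j * d i j)))
      - 2 * (∑ i, (2 * (∑ j, c i j) - ∑ j, 2 * a j * b i j) * a i)
      - 2 * (∑ i, ∑ j, (b i j - (1 / t) * (if i = j then (1:ℝ) else 0)) ^ 2)
      - 2 * (2 * (∑ i, b i i) - (∑ i, (a i)^2) - 2 * n / t) / t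
      - 2 * (∑ i, (a i)^2) / t := by
  have hdelta : (∑ i, ∑ j, (b i j - (1 / t) * (if i = j then (1:ℝ) else 0)) ^ 2)
      = (∑ i, ∑ j, b i j * b i j) - (2 / t) * (∑ i, b i i) + n / t ^ 2 := by
    have h1 : ∀ i : Fin n, (∑ j, (b i j - (1 / t) * (if i = j then (1:ℝ) else 0)) ^ 2)
        = (∑ j, b i j * b i j) - (2 / t) * b i i + 1 / t ^ 2 := by
      intro i
      have h2 : ∀ j : Fin n, (b i j - (1 / t) * (if i = j then (1:ℝ) else 0)) ^ 2
          = b i j * b i j - (if i = j then (2 / t) * b i j else 0)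
            + (if i = j then 1 / t ^ 2 else 0) := by
        intro j
        by_cases h : i = j
        · simp only [h, if_pos]
          field_simp
          ring
        · simp only [h, if_neg, mul_zero, sub_zero, add_zero, if_false]
          ring
      simp only [h2, Finset.sum_add_distrib, Finset.sum_sub_distrib,
        Finset.sum_ite_eq, Finset.mem_univ, if_pos]
    simp only [h1, Finset.sum_add_distrib, Finset.sum_sub_distrib, ← Finset.mul_sum,
      Finset.sum_const, Finset.card_univ, Fintype.card_fin, nsmul_eq_mul]
    ring
  have hsym : (∑ i, ∑ j, a j * d i j) = ∑ i, a i * ∑ j, c i j := by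
    rw [Finset.sum_comm]
    refine Finset.sum_congr rfl fun i _ => ?_
    rw [Finset.mul_sum]
    exact Finset.sum_congr rfl fun j _ => by rw [hd]
  rw [hdelta]
  simp only [mul_add, mul_sub, sub_mul, add_mul, Finset.sum_add_distrib,
    Finset.sum_sub_distrib, ← Finset.mul_sum, Finset.sum_div, sub_div, add_div]
  ring_nf
  ring_nf at hsym
  have e1 : (∑ i, ∑ j, b i j ^ 2) = ∑ i, ∑ j, b i j * b i j := by
    simp [pow_two]
  have e2 : (∑ i, 2 * a i * ∑ j, c i j) = 2 * ∑ i, a i * ∑ j, c i j := by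
    rw [Finset.mul_sum]
    exact Finset.sum_congr rfl fun i _ => by ring
  have e3 : (∑ i, (∑ j, c i j) * 2 * a i) = 2 * ∑ i, a i * ∑ j, c i j := by
    rw [Finset.mul_sum]
    exact Finset.sum_congr rfl fun i _ => by ring
  have e4 : (∑ i, 2 * a i * ∑ j, 2 * a j * b i j)
      = 2 * ∑ i, (∑ j, 2 * a j * b i j) * a i := by
    rw [Finset.mul_sum]
    exact Finset.sum_congr rfl fun i _ => by ring
  linear_combination (norm := ring_nf) (-2 : ℝ) * hsym - e2 + e4 + 2 * e3 - 4 * e1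

end EvoAux

namespace EvoAux

variable {n : ℕ}

def ee (n : ℕ) (i : Fin n) : ℝ × (Fin n → ℝ) := (0, Pi.single i 1)

def tau (n : ℕ) : ℝ × (Fin n → ℝ) := ((1 : ℝ), (0 : Fin n → ℝ))

variable (u : ℝ → (Fin n → ℝ) → ℝ)

def UU : ℝ × (Fin n → ℝ) → ℝ := fun p => u p.1 p.2
def Af (i : Fin n) : ℝ × (Fin n → ℝ) → ℝ := Dd (ee n i) (UU u)
def Bf (i j : Fin n) : ℝ × (Fin n → ℝ) → ℝ := Dd (ee n i) (Af u j)
def Cf (i j k : Fin n) : ℝ × (Fin n → ℝ) → ℝ := Dd (ee n i) (Bf u j k)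
def Phi : ℝ × (Fin n → ℝ) → ℝ := fun q => (∑ i, Bf u i i q) - ∑ i, (Af u i q) ^ 2
def Psi (i : Fin n) : ℝ × (Fin n → ℝ) → ℝ :=
  fun q => (∑ j, Cf u i j j q) - ∑ j, 2 * Af u j q * Bf u i j q
def Gp : ℝ × (Fin n → ℝ) → ℝ := fun q => 2 * (∑ i, Bf u i i q) - ∑ i, (Af u i q) ^ 2
def Theta (i : Fin n) : ℝ × (Fin n → ℝ) → ℝ :=
  fun q => 2 * (∑ j, Cf u i j j q) - ∑ j, 2 * Af u j q * Bf u i j q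

variable {u}
variable (hu : ContDiffOn ℝ (⊤ : ℕ∞) (UU u) (Om n))
include hu

lemma smooth_Af (i : Fin n) : ContDiffOn ℝ (⊤ : ℕ∞) (Af u i) (Om n) := Dd_smooth hu _

lemma smooth_Bf (i j : Fin n) : ContDiffOn ℝ (⊤ : ℕ∞) (Bf u i j) (Om n) :=
  Dd_smooth (smooth_Af hu j) _

lemma smooth_Cf (i j k : Fin n) : ContDiffOn ℝ (⊤ : ℕ∞) (Cf u i j k) (Om n) :=
  Dd_smooth (smooth_Bf hu j k) _

lemma smooth_Gp : ContDiffOn ℝ (⊤ : ℕ∞) (Gp u) (Om n) :=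
  (contDiffOn_const.mul (ContDiffOn.sum fun i _ => smooth_Bf hu i i)).sub
    (ContDiffOn.sum fun i _ => (smooth_Af hu i).pow 2)

lemma pd_u {t : ℝ} (ht : 0 < t) (i : Fin n) (x : Fin n → ℝ) :
    pd i (u t) x = Af u i (t, x) := pd_slice hu ht i x

lemma pd2_u {t : ℝ} (ht : 0 < t) (i j : Fin n) (x : Fin n → ℝ) :
    pd i (pd j (u t)) x = Bf u i j (t, x) := by
  have h1 : pd j (u t) = fun y => Af u j (t, y) := funext fun y => pd_u hu ht j y
  rw [h1]
  exact pd_slice (smooth_Af hu j) ht i x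

lemma lap_u {t : ℝ} (ht : 0 < t) (x : Fin n → ℝ) :
    lap (u t) x = ∑ i, Bf u i i (t, x) :=
  Finset.sum_congr rfl fun i _ => pd2_u hu ht i i x

lemma grad_u {t : ℝ} (ht : 0 < t) (x : Fin n → ℝ) :
    gradSq (u t) x = ∑ i, (Af u i (t, x)) ^ 2 :=
  Finset.sum_congr rfl fun i _ => by rw [pd_u hu ht]

variable (heq : ∀ t > (0:ℝ), ∀ x : Fin n → ℝ,
    deriv (fun s => u s x) t = lap (u t) x - gradSq (u t) x)
include heq

lemma hPDE : ∀ q ∈ Om n, Dd (tau n) (UU u) q = Phi u q := by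
  rintro ⟨s, y⟩ ⟨hs, -⟩
  have hs' : (0:ℝ) < s := hs
  have h0 : deriv (fun r => u r y) s = Dd (tau n) (UU u) (s, y) :=
    (hasDerivAt_slice hu hs' y).deriv
  have h1 := heq s hs' y
  rw [lap_u hu hs', grad_u hu hs'] at h1
  rw [← h0, h1]
  rfl

lemma hDPhi (i : Fin n) : ∀ q ∈ Om n, Dd (ee n i) (Phi u) q = Psi u i q := by
  intro q hq
  have d1 : ∀ j ∈ (Finset.univ : Finset (Fin n)),
      DifferentiableAt ℝ (fun q => Bf u j j q) q := fun j _ => diffAt (smooth_Bf hu j j) hq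
  have d2 : ∀ j ∈ (Finset.univ : Finset (Fin n)),
      DifferentiableAt ℝ (fun q => (Af u j q) ^ 2) q :=
    fun j _ => (diffAt (smooth_Af hu j) hq).pow 2
  calc Dd (ee n i) (Phi u) q
      = Dd (ee n i) (fun q => ∑ j, Bf u j j q) q
        - Dd (ee n i) (fun q => ∑ j, (Af u j q) ^ 2) q :=
        Dd_sub (DifferentiableAt.fun_sum d1) (DifferentiableAt.fun_sum d2)
    _ = (∑ j, Cf u i j j q) - ∑ j, 2 * Af u j q * Bf u i j q := by
        rw [Dd_sum d1, Dd_sum d2]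
        congr 1
        exact Finset.sum_congr rfl fun j _ => by
          rw [Dd_sq (diffAt (smooth_Af hu j) hq)]; rfl

lemma hDtauA (i : Fin n) : ∀ q ∈ Om n, Dd (tau n) (Af u i) q = Psi u i q := by
  intro q hq
  calc Dd (tau n) (Af u i) q
      = Dd (ee n i) (Dd (tau n) (UU u)) q := Dd_comm hu hq _ _
    _ = Dd (ee n i) (Phi u) q := Dd_congr (hPDE hu heq) hq _
    _ = Psi u i q := hDPhi hu heq i q hq

lemma hDtauB (i : Fin n) :
    ∀ q ∈ Om n, Dd (tau n) (Bf u i i) q = Dd (ee n i) (Psi u i) q := by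
  intro q hq
  calc Dd (tau n) (Bf u i i) q
      = Dd (ee n i) (Dd (tau n) (Af u i)) q := Dd_comm (smooth_Af hu i) hq _ _
    _ = Dd (ee n i) (Psi u i) q := Dd_congr (hDtauA hu heq i) hq _

lemma Dd_term (i j : Fin n) {q} (hq : q ∈ Om n) :
    Dd (ee n i) (fun q => 2 * Af u j q * Bf u i j q) q
      = 2 * (Bf u i j q * Bf u i j q + Af u j q * Cf u i i j q) := by
  have h1 : (fun q => 2 * Af u j q * Bf u i j q)
      = fun q => 2 * (Af u j q * Bf u i j q) := by funext y; ring
  rw [h1, Dd_const_mul (f := fun q => Af u j q * Bf u i j q) ((diffAt (smooth_Af hu j) hq).mul (diffAt (smooth_Bf hu i j) hq)),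
    Dd_mul (diffAt (smooth_Af hu j) hq) (diffAt (smooth_Bf hu i j) hq)]
  have h2 : Dd (ee n i) (Af u j) q = Bf u i j q := rfl
  have h3 : Dd (ee n i) (Bf u i j) q = Cf u i i j q := rfl
  rw [h2, h3]; ring

lemma hDPsi (i : Fin n) : ∀ q ∈ Om n, Dd (ee n i) (Psi u i) q
    = (∑ j, Dd (ee n i) (Cf u i j j) q)
      - ∑ j, 2 * (Bf u i j q * Bf u i j q + Af u j q * Cf u i i j q) := by
  intro q hq
  have d1 : ∀ j ∈ (Finset.univ : Finset (Fin n)),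
      DifferentiableAt ℝ (fun q => Cf u i j j q) q := fun j _ => diffAt (smooth_Cf hu i j j) hq
  have d2 : ∀ j ∈ (Finset.univ : Finset (Fin n)),
      DifferentiableAt ℝ (fun q => 2 * Af u j q * Bf u i j q) q := fun j _ =>
    ((differentiableAt_const 2).mul (diffAt (smooth_Af hu j) hq)).mul
      (diffAt (smooth_Bf hu i j) hq)
  calc Dd (ee n i) (Psi u i) q
      = Dd (ee n i) (fun q => ∑ j, Cf u i j j q) q
        - Dd (ee n i) (fun q => ∑ j, 2 * Af u j q * Bf u i j q) q :=
        Dd_sub (DifferentiableAt.fun_sum d1) (DifferentiableAt.fun_sum d2)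
    _ = _ := by
        rw [Dd_sum d1, Dd_sum d2]
        congr 1
        exact Finset.sum_congr rfl fun j _ => Dd_term hu heq i j hq

lemma hDGp (i : Fin n) : ∀ q ∈ Om n, Dd (ee n i) (Gp u) q = Theta u i q := by
  intro q hq
  have d1 : ∀ j ∈ (Finset.univ : Finset (Fin n)),
      DifferentiableAt ℝ (fun q => Bf u j j q) q := fun j _ => diffAt (smooth_Bf hu j j) hq
  have d2 : ∀ j ∈ (Finset.univ : Finset (Fin n)),
      DifferentiableAt ℝ (fun q => (Af u j q) ^ 2) q :=
    fun j _ => (diffAt (smooth_Af hu j) hq).pow 2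
  calc Dd (ee n i) (Gp u) q
      = Dd (ee n i) (fun q => 2 * ∑ j, Bf u j j q) q
        - Dd (ee n i) (fun q => ∑ j, (Af u j q) ^ 2) q :=
        Dd_sub ((differentiableAt_const 2).mul (DifferentiableAt.fun_sum d1))
          (DifferentiableAt.fun_sum d2)
    _ = 2 * (∑ j, Cf u i j j q) - ∑ j, 2 * Af u j q * Bf u i j q := by
        rw [Dd_const_mul (DifferentiableAt.fun_sum d1), Dd_sum d1, Dd_sum d2]
        congr 1
        exact Finset.sum_congr rfl fun j _ => by
          rw [Dd_sq (diffAt (smooth_Af hu j) hq)]; rfl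

lemma hDTheta (i : Fin n) : ∀ q ∈ Om n, Dd (ee n i) (Theta u i) q
    = 2 * (∑ j, Dd (ee n i) (Cf u i j j) q)
      - ∑ j, 2 * (Bf u i j q * Bf u i j q + Af u j q * Cf u i i j q) := by
  intro q hq
  have d1 : ∀ j ∈ (Finset.univ : Finset (Fin n)),
      DifferentiableAt ℝ (fun q => Cf u i j j q) q := fun j _ => diffAt (smooth_Cf hu i j j) hq
  have d2 : ∀ j ∈ (Finset.univ : Finset (Fin n)),
      DifferentiableAt ℝ (fun q => 2 * Af u j q * Bf u i j q) q := fun j _ =>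
    ((differentiableAt_const 2).mul (diffAt (smooth_Af hu j) hq)).mul
      (diffAt (smooth_Bf hu i j) hq)
  calc Dd (ee n i) (Theta u i) q
      = Dd (ee n i) (fun q => 2 * ∑ j, Cf u i j j q) q
        - Dd (ee n i) (fun q => ∑ j, 2 * Af u j q * Bf u i j q) q :=
        Dd_sub ((differentiableAt_const 2).mul (DifferentiableAt.fun_sum d1))
          (DifferentiableAt.fun_sum d2)
    _ = _ := by
        rw [Dd_const_mul (DifferentiableAt.fun_sum d1), Dd_sum d1, Dd_sum d2]
        congr 1
        exact Finset.sum_congr rfl fun j _ => Dd_term hu heq i j hq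

lemma hCsym (i j : Fin n) : ∀ q ∈ Om n, Cf u j j i q = Cf u i j j q := by
  intro q hq
  have h1 : ∀ q' ∈ Om n, Bf u j i q' = Bf u i j q' := fun q' hq' =>
    Dd_comm hu hq' (ee n j) (ee n i)
  calc Cf u j j i q
      = Dd (ee n j) (Bf u i j) q := Dd_congr h1 hq _
    _ = Dd (ee n i) (Dd (ee n j) (Af u j)) q := Dd_comm (smooth_Af hu j) hq _ _
    _ = Cf u i j j q := rfl

lemma hDtauG : ∀ q ∈ Om n, Dd (tau n) (Gp u) q
    = 2 * (∑ i, Dd (ee n i) (Psi u i) q) - ∑ i, 2 * Af u i q * Psi u i q := by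
  intro q hq
  have d1 : ∀ j ∈ (Finset.univ : Finset (Fin n)),
      DifferentiableAt ℝ (fun q => Bf u j j q) q := fun j _ => diffAt (smooth_Bf hu j j) hq
  have d2 : ∀ j ∈ (Finset.univ : Finset (Fin n)),
      DifferentiableAt ℝ (fun q => (Af u j q) ^ 2) q :=
    fun j _ => (diffAt (smooth_Af hu j) hq).pow 2
  calc Dd (tau n) (Gp u) q
      = Dd (tau n) (fun q => 2 * ∑ j, Bf u j j q) q
        - Dd (tau n) (fun q => ∑ j, (Af u j q) ^ 2) q :=
        Dd_sub ((differentiableAt_const 2).mul (DifferentiableAt.fun_sum d1))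
          (DifferentiableAt.fun_sum d2)
    _ = 2 * (∑ i, Dd (tau n) (Bf u i i) q) - ∑ i, 2 * Af u i q * Dd (tau n) (Af u i) q := by
        rw [Dd_const_mul (DifferentiableAt.fun_sum d1), Dd_sum d1, Dd_sum d2]
        congr 1
        exact Finset.sum_congr rfl fun j _ => Dd_sq (diffAt (smooth_Af hu j) hq)
    _ = 2 * (∑ i, Dd (ee n i) (Psi u i) q) - ∑ i, 2 * Af u i q * Psi u i q := by
        congr 1
        · rw [Finset.mul_sum, Finset.mul_sum]
          exact Finset.sum_congr rfl fun i _ => by rw [hDtauB hu heq i q hq]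
        · exact Finset.sum_congr rfl fun i _ => by rw [hDtauA hu heq i q hq]

end EvoAux

open EvoAux in
/-- Corollary 2.2: evolution equation for `H = 2Δu − |∇u|² − 2n/t` when
`∂u/∂t = Δu − |∇u|²` on flat space. -/
theorem evolution_H
    (n : ℕ) (hn : 1 ≤ n) (u : ℝ → (Fin n → ℝ) → ℝ)
    (hsmooth : ContDiffOn ℝ (⊤ : ℕ∞) (fun p : ℝ × (Fin n → ℝ) => u p.1 p.2)
      (Set.Ioi 0 ×ˢ Set.univ))
    (heq : ∀ t > (0:ℝ), ∀ x : Fin n → ℝ,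
      deriv (fun s => u s x) t = lap (u t) x - gradSq (u t) x)
    (H : ℝ → (Fin n → ℝ) → ℝ)
    (hH : ∀ t x, H t x = 2 * lap (u t) x - gradSq (u t) x - 2 * n / t) :
    ∀ t > (0:ℝ), ∀ x : Fin n → ℝ,
      deriv (fun s => H s x) t =
        lap (H t) x - 2 * (∑ i, pd i (H t) x * pd i (u t) x)
        - 2 * (∑ i, ∑ j, (hess i j (u t) x - (1 / t) * (if i = j then (1:ℝ) else 0)) ^ 2)
        - 2 * H t x / t - 2 * gradSq (u t) x / t := by
  intro t ht x
  have hu : ContDiffOn ℝ (⊤ : ℕ∞) (UU u) (Om n) := hsmooth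
  have hq : ((t, x) : ℝ × (Fin n → ℝ)) ∈ Om n := mem_Om ht x
  -- pointwise description of H for positive times
  have hHs : ∀ s, 0 < s → ∀ y, H s y = Gp u (s, y) - 2 * (n : ℝ) / s := by
    intro s hs y
    rw [hH, lap_u hu hs, grad_u hu hs]
    rfl
  -- time derivative of H
  have hder2 : HasDerivAt (fun s : ℝ => 2 * (n : ℝ) / s) (-(2 * (n : ℝ) / t ^ 2)) t := by
    have hfun : (fun s : ℝ => 2 * (n : ℝ) / s) = fun s => 2 * (n : ℝ) * s⁻¹ := by
      funext s; rw [div_eq_mul_inv]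
    have hval : -(2 * (n : ℝ) / t ^ 2) = 2 * (n : ℝ) * -((t ^ 2)⁻¹) := by
      rw [div_eq_mul_inv]; ring
    rw [hfun, hval]
    exact (hasDerivAt_inv (ne_of_gt ht)).const_mul _
  have hder : HasDerivAt (fun s => H s x)
      (Dd (tau n) (Gp u) (t, x) - -(2 * (n : ℝ) / t ^ 2)) t := by
    refine ((hasDerivAt_slice (smooth_Gp hu) ht x).sub hder2).congr_of_eventuallyEq ?_
    filter_upwards [isOpen_Ioi.mem_nhds ht] with s hs
    exact hHs s hs x
  rw [hder.deriv, sub_neg_eq_add, hDtauG hu heq (t, x) hq]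
  -- spatial derivatives of H
  have hpdH : ∀ i y, pd i (H t) y = Dd (ee n i) (Gp u) (t, y) := by
    intro i y
    have h2 : H t = fun y => (fun q => Gp u q - 2 * (n:ℝ) / t) (t, y) :=
      funext fun y => hHs t ht y
    rw [h2, pd_slice ((smooth_Gp hu).sub contDiffOn_const) ht i y, Dd_sub_const]
    rfl
  have hlapH : lap (H t) x = ∑ i, Dd (ee n i) (Theta u i) (t, x) := by
    refine Finset.sum_congr rfl fun i _ => ?_
    have h1 : pd i (H t) = fun y => Dd (ee n i) (Gp u) (t, y) := funext fun y => hpdH i y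
    rw [h1, pd_slice (Dd_smooth (smooth_Gp hu) (ee n i)) ht i x]
    exact Dd_congr (hDGp hu heq i) hq _
  rw [hlapH]
  have hsum4 : (∑ i, Dd (ee n i) (Theta u i) (t, x))
      = ∑ i, (2 * (∑ j, Dd (ee n i) (Cf u i j j) (t, x))
          - ∑ j, 2 * (Bf u i j (t, x) * Bf u i j (t, x)
            + Af u j (t, x) * Cf u i i j (t, x))) :=
    Finset.sum_congr rfl fun i _ => hDTheta hu heq i (t, x) hq
  rw [hsum4]
  have hsum1 : (∑ i, Dd (ee n i) (Psi u i) (t, x))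
      = ∑ i, ((∑ j, Dd (ee n i) (Cf u i j j) (t, x))
          - ∑ j, 2 * (Bf u i j (t, x) * Bf u i j (t, x)
            + Af u j (t, x) * Cf u i i j (t, x))) :=
    Finset.sum_congr rfl fun i _ => hDPsi hu heq i (t, x) hq
  rw [hsum1]
  have hsum2 : (∑ i, pd i (H t) x * pd i (u t) x)
      = ∑ i, (2 * (∑ j, Cf u i j j (t, x))
          - ∑ j, 2 * Af u j (t, x) * Bf u i j (t, x)) * Af u i (t, x) := by
    refine Finset.sum_congr rfl fun i _ => ?_
    rw [hpdH i x, pd_u hu ht, hDGp hu heq i (t, x) hq]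
    rfl
  rw [hsum2]
  have hsum3 : (∑ i, ∑ j,
        (hess i j (u t) x - (1 / t) * (if i = j then (1:ℝ) else 0)) ^ 2)
      = ∑ i, ∑ j, (Bf u i j (t, x) - (1 / t) * (if i = j then (1:ℝ) else 0)) ^ 2 :=
    Finset.sum_congr rfl fun i _ => Finset.sum_congr rfl fun j _ => by
      rw [show hess i j (u t) x = Bf u i j (t, x) from pd2_u hu ht i j x]
  rw [hsum3]
  have hHtx : H t x = 2 * (∑ i, Bf u i i (t, x)) - (∑ i, (Af u i (t, x)) ^ 2)
      - 2 * (n : ℝ) / t := by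
    rw [hHs t ht x]; rfl
  rw [hHtx, grad_u hu ht]
  have hPsix : ∀ i, Psi u i (t, x)
      = (∑ j, Cf u i j j (t, x)) - ∑ j, 2 * Af u j (t, x) * Bf u i j (t, x) := fun i => rfl
  simp only [hPsix]
  exact algebra_key n (ne_of_gt ht) (fun i => Af u i (t, x)) (fun i j => Bf u i j (t, x))
    (fun i j => Cf u i j j (t, x)) (fun i j => Cf u i i j (t, x))
    (fun i j => Dd (ee n i) (Cf u i j j) (t, x)) (fun i j => hCsym hu heq i j (t, x) hq)
end
end

section
/- Let n ≥ 1 and let f : (0,∞) × ℝⁿ → ℝ be a smooth positive solution of the heat equation ∂f/∂t = Δf that is ℤⁿ-periodic in the space variable. Let 0 < t₁ < t₂, let x₁, x₂ ∈ ℝⁿ, and let γ : [t₁, t₂] → ℝⁿ be any C¹ path with γ(t₁) = x₁ and γ(t₂) = x₂. Then f(t₁, x₁) ≤ f(t₂, x₂) · (t₂/t₁)ⁿ · exp( (1/2) ∫_{t₁}^{t₂} |γ'(t)|² dt ). -/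
open MeasureTheory Real

noncomputable section

section infra
variable {E : Type*} [NormedAddCommGroup E] [NormedSpace ℝ E]

def DD (v : E) (g : E → ℝ) (p : E) : ℝ := fderiv ℝ g p v

lemma contDiffAt_DD {g : E → ℝ} {p : E} (h : ContDiffAt ℝ (⊤:ℕ∞) g p) (v : E) :
    ContDiffAt ℝ (⊤:ℕ∞) (DD v g) p := by
  have h1 : ContDiffAt ℝ (⊤:ℕ∞) (fderiv ℝ g) p := h.fderiv_right (by simp)
  exact (ContinuousLinearMap.apply ℝ ℝ v).contDiff.contDiffAt.comp p h1

lemma DD_congr {g₁ g₂ : E → ℝ} {U : Set E} (hU : IsOpen U) (h : ∀ q ∈ U, g₁ q = g₂ q)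
    {p : E} (hp : p ∈ U) (v : E) : DD v g₁ p = DD v g₂ p := by
  have : g₁ =ᶠ[nhds p] g₂ := Filter.eventuallyEq_of_mem (hU.mem_nhds hp) h
  simp [DD, this.fderiv_eq]

lemma DD_symm {g : E → ℝ} {p : E} (h : ContDiffAt ℝ (⊤:ℕ∞) g p) (v w : E) :
    DD v (DD w g) p = DD w (DD v g) p := by
  have hd : DifferentiableAt ℝ (fderiv ℝ g) p :=
    (h.fderiv_right (m := 1) (by rw [show ((1:WithTop ℕ∞) + 1) = ((2:ℕ∞) : WithTop ℕ∞) from rfl]; exact_mod_cast le_top)).differentiableAt (by norm_num)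
  have key : ∀ v w : E, DD v (DD w g) p = fderiv ℝ (fderiv ℝ g) p v w := by
    intro v w
    have : HasFDerivAt (fun q => (ContinuousLinearMap.apply ℝ ℝ w) (fderiv ℝ g q))
        ((ContinuousLinearMap.apply ℝ ℝ w).comp (fderiv ℝ (fderiv ℝ g) p)) p :=
      (ContinuousLinearMap.apply ℝ ℝ w).hasFDerivAt.comp p hd.hasFDerivAt
    have h2 := this.fderiv
    show fderiv ℝ (fun q => (ContinuousLinearMap.apply ℝ ℝ w) (fderiv ℝ g q)) p v = _
    rw [h2]; rfl
  rw [key, key]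
  exact (h.isSymmSndFDerivAt (by rw [minSmoothness_of_isRCLikeNormedField, show ((2:WithTop ℕ∞)) = ((2:ℕ∞) : WithTop ℕ∞) from rfl]; exact_mod_cast le_top)) v w

lemma DD_add {g h : E → ℝ} {p : E} (hg : DifferentiableAt ℝ g p) (hh : DifferentiableAt ℝ h p)
    (v : E) : DD v (fun q => g q + h q) p = DD v g p + DD v h p := by
  simp [DD, fderiv_fun_add hg hh]

lemma DD_sub {g h : E → ℝ} {p : E} (hg : DifferentiableAt ℝ g p) (hh : DifferentiableAt ℝ h p)
    (v : E) : DD v (fun q => g q - h q) p = DD v g p - DD v h p := by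
  simp [DD, fderiv_fun_sub hg hh]

lemma DD_mul {g h : E → ℝ} {p : E} (hg : DifferentiableAt ℝ g p) (hh : DifferentiableAt ℝ h p)
    (v : E) : DD v (fun q => g q * h q) p = DD v g p * h p + g p * DD v h p := by
  simp [DD, fderiv_fun_mul hg hh]; ring

lemma DD_const_mul {g : E → ℝ} {p : E} (hg : DifferentiableAt ℝ g p) (c : ℝ)
    (v : E) : DD v (fun q => c * g q) p = c * DD v g p := by
  simp [DD, fderiv_const_mul hg c]

lemma DD_sum {ι : Type*} {s : Finset ι} {g : ι → E → ℝ} {p : E}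
    (hg : ∀ i ∈ s, DifferentiableAt ℝ (g i) p) (v : E) :
    DD v (fun q => ∑ i ∈ s, g i q) p = ∑ i ∈ s, DD v (g i) p := by
  classical
  induction s using Finset.induction with
  | empty => simp [DD]
  | insert _ _ hne ih =>
    rename_i a s
    rw [Finset.sum_insert hne]
    have h1 : DifferentiableAt ℝ (g a) p := hg a (Finset.mem_insert_self a s)
    have h2 : ∀ i ∈ s, DifferentiableAt ℝ (g i) p := fun i hi => hg i (Finset.mem_insert_of_mem hi)
    have h3 : DifferentiableAt ℝ (fun q => ∑ i ∈ s, g i q) p := by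
      apply DifferentiableAt.fun_sum h2
    simp only [Finset.sum_insert hne]
    rw [show (fun q => g a q + ∑ i ∈ s, g i q) = (fun q => g a q + (fun q => ∑ i ∈ s, g i q) q) from rfl,
      DD_add h1 h3, ih h2]

lemma DD_sq {g : E → ℝ} {p : E} (hg : DifferentiableAt ℝ g p) (v : E) :
    DD v (fun q => (g q) ^ 2) p = 2 * g p * DD v g p := by
  have := DD_mul hg hg v
  simp only [← sq] at this
  rw [this]; ring

lemma DD_log {g : E → ℝ} {p : E} (hg : DifferentiableAt ℝ g p) (hne : g p ≠ 0) (v : E) :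
    DD v (fun q => Real.log (g q)) p = DD v g p / g p := by
  have := (hg.hasFDerivAt.log hne).fderiv
  simp [DD, this]; ring

lemma DD_inv {g : E → ℝ} {p : E} (hg : DifferentiableAt ℝ g p) (hne : g p ≠ 0) (v : E) :
    DD v (fun q => (g q)⁻¹) p = -DD v g p / (g p) ^ 2 := by
  have h1 : HasFDerivAt (fun q => (g q)⁻¹) ((-((g p)^2)⁻¹) • fderiv ℝ g p) p :=
    (hasDerivAt_inv hne).comp_hasFDerivAt p hg.hasFDerivAt
  rw [DD, h1.fderiv]
  simp [DD]; ring

lemma DD_div {g h : E → ℝ} {p : E} (hg : DifferentiableAt ℝ g p) (hh : DifferentiableAt ℝ h p)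
    (hne : h p ≠ 0) (v : E) :
    DD v (fun q => g q / h q) p = (DD v g p * h p - g p * DD v h p) / (h p) ^ 2 := by
  have h1 : DifferentiableAt ℝ (fun q => (h q)⁻¹) p := hh.inv hne
  have := DD_mul hg h1 v
  simp only [div_eq_mul_inv]
  rw [this, DD_inv hh hne]
  field_simp; ring

lemma DD_linear (g : E → ℝ) (p : E) (v w : E) (a b : ℝ) :
    DD (a • v + b • w) g p = a * DD v g p + b * DD w g p := by
  simp [DD]

lemma deriv_nonneg_of_isMaxOn_right {ψ : ℝ → ℝ} {d a t₀ : ℝ} (h : HasDerivAt ψ d t₀)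
    (hmax : ∀ s ∈ Set.Icc a t₀, ψ s ≤ ψ t₀) (hat : a < t₀) : 0 ≤ d := by
  have hloc : IsLocalMaxOn ψ (Set.Iic t₀) t₀ := by
    filter_upwards [mem_nhdsWithin_of_mem_nhds (Ioi_mem_nhds hat), self_mem_nhdsWithin] with
      s hs1 hs2
    exact hmax s ⟨le_of_lt hs1, hs2⟩
  have htc : (-1 : ℝ) ∈ posTangentConeAt (Set.Iic t₀) t₀ := by
    apply mem_posTangentConeAt_of_segment_subset
    intro x hx
    rw [segment_symm, segment_eq_Icc (by linarith)] at hx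
    exact hx.2
  have := hloc.hasFDerivWithinAt_nonpos h.hasFDerivAt.hasFDerivWithinAt htc
  simp at this
  linarith

lemma second_deriv_test {φ φ' φ'' : ℝ → ℝ}
    (h1 : ∀ s, HasDerivAt φ (φ' s) s) (h2 : ∀ s, HasDerivAt φ' (φ'' s) s)
    (hc : ContinuousAt φ'' 0) (hmax : ∀ s, φ s ≤ φ 0) : φ' 0 = 0 ∧ φ'' 0 ≤ 0 := by
  have hd0 : φ' 0 = 0 := by
    have hl : IsLocalMax φ 0 := Filter.Eventually.of_forall hmax
    rw [← (h1 0).deriv]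
    exact hl.deriv_eq_zero
  refine ⟨hd0, ?_⟩
  by_contra hpos
  push_neg at hpos
  have hev : ∀ᶠ s in nhds (0:ℝ), 0 < φ'' s := hc (Ioi_mem_nhds hpos)
  obtain ⟨ε, hε, hball⟩ := Metric.eventually_nhds_iff.mp hev
  set δ := ε / 2 with hδ
  have hδpos : 0 < δ := by positivity
  have hsm : StrictMonoOn φ' (Set.Icc 0 δ) := by
    apply strictMonoOn_of_deriv_pos (convex_Icc _ _)
    · exact Continuous.continuousOn (continuous_iff_continuousAt.mpr fun s => (h2 s).continuousAt)
    · intro x hx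
      rw [interior_Icc] at hx
      rw [(h2 x).deriv]
      apply hball
      simp [abs_of_pos hx.1]
      calc x < δ := hx.2
        _ < ε := by linarith
  have hsm2 : StrictMonoOn φ (Set.Icc 0 δ) := by
    apply strictMonoOn_of_deriv_pos (convex_Icc _ _)
    · exact Continuous.continuousOn (continuous_iff_continuousAt.mpr fun s => (h1 s).continuousAt)
    · intro x hx
      rw [interior_Icc] at hx
      rw [(h1 x).deriv]
      calc (0:ℝ) = φ' 0 := hd0.symm
        _ < φ' x := hsm (Set.left_mem_Icc.mpr hδpos.le) ⟨hx.1.le, hx.2.le⟩ hx.1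
  have := hsm2 (Set.left_mem_Icc.mpr hδpos.le) (Set.right_mem_Icc.mpr hδpos.le) hδpos
  exact absurd (hmax δ) (by linarith)

def Uo (n : ℕ) : Set (ℝ × (Fin n → ℝ)) := Set.Ioi 0 ×ˢ Set.univ

lemma isOpen_Uo {n : ℕ} : IsOpen (Uo n) := isOpen_Ioi.prod isOpen_univ

lemma mem_Uo {n : ℕ} {p : ℝ × (Fin n → ℝ)} : p ∈ Uo n ↔ 0 < p.1 := by
  simp [Uo]

def e0 (n : ℕ) : ℝ × (Fin n → ℝ) := (1, 0)

def ev {n : ℕ} (i : Fin n) : ℝ × (Fin n → ℝ) := (0, Pi.single i 1)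

structure Good (n : ℕ) (g : ℝ × (Fin n → ℝ) → ℝ) : Prop where
  smooth : ∀ p ∈ Uo n, ContDiffAt ℝ (⊤:ℕ∞) g p
  per : ∀ p ∈ Uo n, ∀ m : Fin n → ℤ, g (p + (0, fun i => (m i : ℝ))) = g p

lemma Good.diffAt {n : ℕ} {g : ℝ × (Fin n → ℝ) → ℝ} (hg : Good n g)
    {p : ℝ × (Fin n → ℝ)} (hp : p ∈ Uo n) : DifferentiableAt ℝ g p :=
  (hg.smooth p hp).differentiableAt (by simp)

lemma Good.dd {n : ℕ} {g : ℝ × (Fin n → ℝ) → ℝ} (hg : Good n g) (v : ℝ × (Fin n → ℝ)) :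
    Good n (DD v g) := by
  constructor
  · exact fun p hp => contDiffAt_DD (hg.smooth p hp) v
  · intro p hp m
    set c : ℝ × (Fin n → ℝ) := (0, fun i => (m i : ℝ)) with hc
    have hpc : p + c ∈ Uo n := by
      rw [mem_Uo] at hp ⊢
      simpa [hc] using hp
    have h1 : ∀ q ∈ Uo n, g (q + c) = g q := fun q hq => hg.per q hq m
    have heq : (fun q => g (q + c)) =ᶠ[nhds p] g :=
      Filter.eventuallyEq_of_mem (isOpen_Uo.mem_nhds hp) h1
    have hcomp : HasFDerivAt (fun q => g (q + c)) (fderiv ℝ g (p + c)) p := by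
      have hinner : HasFDerivAt (fun q : ℝ × (Fin n → ℝ) => q + c)
          (ContinuousLinearMap.id ℝ _) p := (hasFDerivAt_id p).add_const c
      have := (hg.diffAt hpc).hasFDerivAt.comp p hinner
      simpa [Function.comp_def] using this
    have : fderiv ℝ g p = fderiv ℝ g (p + c) := by
      rw [← heq.fderiv_eq, hcomp.fderiv]
    simp only [DD]
    rw [this]

/-- `W = ½|∇Q|² - ∂ₜQ` -/
def Wf {n : ℕ} (Q : ℝ × (Fin n → ℝ) → ℝ) (p : ℝ × (Fin n → ℝ)) : ℝ :=
  (1/2) * ∑ i, (DD (ev i) Q p) ^ 2 - DD (e0 n) Q p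

lemma Good.wf {n : ℕ} {Q : ℝ × (Fin n → ℝ) → ℝ} (hQ : Good n Q) : Good n (Wf Q) := by
  constructor
  · intro p hp
    apply ContDiffAt.sub
    · exact ContDiffAt.mul contDiffAt_const (ContDiffAt.sum fun i _ => ((hQ.dd (ev i)).smooth p hp).pow 2)
    · exact (hQ.dd (e0 n)).smooth p hp
  · intro p hp m
    simp only [Wf]
    congr 1
    · congr 1
      exact Finset.sum_congr rfl fun i _ => by rw [((hQ.dd (ev i)).per p hp m)]
    · exact (hQ.dd (e0 n)).per p hp m

section core
variable {n : ℕ} {Q : ℝ × (Fin n → ℝ) → ℝ}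

lemma DW_eq (hQ : Good n Q) {p : ℝ × (Fin n → ℝ)} (hp : p ∈ Uo n) (v : ℝ × (Fin n → ℝ)) :
    DD v (Wf Q) p =
      ∑ i, DD (ev i) Q p * DD v (DD (ev i) Q) p - DD v (DD (e0 n) Q) p := by
  have hdR : ∀ i : Fin n, DifferentiableAt ℝ (DD (ev i) Q) p := fun i => (hQ.dd (ev i)).diffAt hp
  have hdR0 : DifferentiableAt ℝ (DD (e0 n) Q) p := (hQ.dd (e0 n)).diffAt hp
  have hdsq : ∀ i : Fin n, DifferentiableAt ℝ (fun q => (DD (ev i) Q q)^2) p :=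
    fun i => (hdR i).pow 2
  have hdsum : DifferentiableAt ℝ (fun q => ∑ i, (DD (ev i) Q q)^2) p :=
    DifferentiableAt.fun_sum fun i _ => hdsq i
  have h1 : DifferentiableAt ℝ (fun q => (1/2 : ℝ) * ∑ i, (DD (ev i) Q q)^2) p :=
    hdsum.const_mul _
  rw [show Wf Q = fun q => (fun q => (1/2 : ℝ) * ∑ i, (DD (ev i) Q q)^2) q - DD (e0 n) Q q
      from rfl, DD_sub h1 hdR0, DD_const_mul hdsum,
    DD_sum (fun i _ => hdsq i)]
  have : ∀ i : Fin n, DD v (fun q => (DD (ev i) Q q)^2) p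
      = 2 * DD (ev i) Q p * DD v (DD (ev i) Q) p := fun i => DD_sq (hdR i) v
  rw [Finset.sum_congr rfl fun i _ => this i, Finset.mul_sum]
  congr 1
  apply Finset.sum_congr rfl
  intro i _
  ring

lemma DDW_eq (hQ : Good n Q) {p : ℝ × (Fin n → ℝ)} (hp : p ∈ Uo n)
    (v w : ℝ × (Fin n → ℝ)) :
    DD w (DD v (Wf Q)) p =
      ∑ i, (DD w (DD (ev i) Q) p * DD v (DD (ev i) Q) p
          + DD (ev i) Q p * DD w (DD v (DD (ev i) Q)) p)
        - DD w (DD v (DD (e0 n) Q)) p := by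
  have hcongr : DD w (DD v (Wf Q)) p = DD w
      (fun q => ∑ i, DD (ev i) Q q * DD v (DD (ev i) Q) q - DD v (DD (e0 n) Q) q) p :=
    DD_congr isOpen_Uo (fun q hq => DW_eq hQ hq v) hp w
  have hdR : ∀ i : Fin n, DifferentiableAt ℝ (DD (ev i) Q) p := fun i => (hQ.dd (ev i)).diffAt hp
  have hdRv : ∀ i : Fin n, DifferentiableAt ℝ (DD v (DD (ev i) Q)) p :=
    fun i => ((hQ.dd (ev i)).dd v).diffAt hp
  have hdR0v : DifferentiableAt ℝ (DD v (DD (e0 n) Q)) p := ((hQ.dd (e0 n)).dd v).diffAt hp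
  have hdprod : ∀ i : Fin n, DifferentiableAt ℝ
      (fun q => DD (ev i) Q q * DD v (DD (ev i) Q) q) p := fun i => (hdR i).mul (hdRv i)
  have hdsum : DifferentiableAt ℝ (fun q => ∑ i, DD (ev i) Q q * DD v (DD (ev i) Q) q) p :=
    DifferentiableAt.fun_sum fun i _ => hdprod i
  rw [hcongr,
    show (fun q => ∑ i, DD (ev i) Q q * DD v (DD (ev i) Q) q - DD v (DD (e0 n) Q) q)
      = fun q => (fun q => ∑ i, DD (ev i) Q q * DD v (DD (ev i) Q) q) q
          - DD v (DD (e0 n) Q) q from rfl,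
    DD_sub hdsum hdR0v, DD_sum (fun i _ => hdprod i)]
  congr 1
  apply Finset.sum_congr rfl
  intro i _
  exact DD_mul (hdR i) (hdRv i) w

end core

section core2
variable {n : ℕ} {Q : ℝ × (Fin n → ℝ) → ℝ}

/-- heat equation for `Q = log f`: `∂ₜQ = ΔQ + |∇Q|²`. -/
def HeatQ (n : ℕ) (Q : ℝ × (Fin n → ℝ) → ℝ) : Prop :=
  ∀ p ∈ Uo n, DD (e0 n) Q p
    = ∑ i, DD (ev i) (DD (ev i) Q) p + ∑ i, (DD (ev i) Q p) ^ 2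

lemma DR0_eq (hQ : Good n Q) (hheat : HeatQ n Q) {p : ℝ × (Fin n → ℝ)} (hp : p ∈ Uo n)
    (v : ℝ × (Fin n → ℝ)) :
    DD v (DD (e0 n) Q) p = ∑ i, DD v (DD (ev i) (DD (ev i) Q)) p
      + ∑ i, 2 * DD (ev i) Q p * DD v (DD (ev i) Q) p := by
  have hcongr : DD v (DD (e0 n) Q) p = DD v
      (fun q => (fun q => ∑ i, DD (ev i) (DD (ev i) Q) q) q
        + (fun q => ∑ i, (DD (ev i) Q q)^2) q) p :=
    DD_congr isOpen_Uo (fun q hq => hheat q hq) hp v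
  have hd1 : ∀ i : Fin n, DifferentiableAt ℝ (DD (ev i) (DD (ev i) Q)) p :=
    fun i => ((hQ.dd (ev i)).dd (ev i)).diffAt hp
  have hdR : ∀ i : Fin n, DifferentiableAt ℝ (DD (ev i) Q) p := fun i => (hQ.dd (ev i)).diffAt hp
  have hs1 : DifferentiableAt ℝ (fun q => ∑ i, DD (ev i) (DD (ev i) Q) q) p :=
    DifferentiableAt.fun_sum fun i _ => hd1 i
  have hs2 : DifferentiableAt ℝ (fun q => ∑ i, (DD (ev i) Q q)^2) p :=
    DifferentiableAt.fun_sum fun i _ => (hdR i).pow 2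
  rw [hcongr, DD_add hs1 hs2, DD_sum (fun i _ => hd1 i), DD_sum (g := fun i q => (DD (ev i) Q q)^2) (fun i _ => (hdR i).pow 2)]
  congr 1
  exact Finset.sum_congr rfl fun i _ => DD_sq (hdR i) v

lemma star_identity (hQ : Good n Q) (hheat : HeatQ n Q) {p : ℝ × (Fin n → ℝ)}
    (hp : p ∈ Uo n) :
    DD (e0 n) (Wf Q) p - (∑ j, DD (ev j) (DD (ev j) (Wf Q)) p)
      - 2 * ∑ j, DD (ev j) Q p * DD (ev j) (Wf Q) p
    = -∑ i, ∑ j, (DD (ev i) (DD (ev j) Q) p) ^ 2 := by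
  set r : Fin n → ℝ := fun i => DD (ev i) Q p with hr
  set A : Fin n → Fin n → ℝ := fun i j => DD (ev i) (DD (ev j) Q) p with hA
  set B : Fin n → ℝ := fun i => DD (e0 n) (DD (ev i) Q) p with hBdef
  set T : Fin n → Fin n → ℝ := fun j i => DD (ev j) (DD (ev j) (DD (ev i) Q)) p with hT
  set C : Fin n → ℝ := fun i => DD (e0 n) (DD (ev i) (DD (ev i) Q)) p with hC
  -- symmetry of A
  have hAsymm : ∀ i j, A i j = A j i := fun i j => DD_symm (hQ.smooth p hp) (ev i) (ev j)
  -- symmetry: DD v (DD e0 Q) = DD e0 (DD v Q) etc.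
  have hQsymm : ∀ v w, DD v (DD w Q) p = DD w (DD v Q) p :=
    fun v w => DD_symm (hQ.smooth p hp) v w
  have hRsymm : ∀ i : Fin n, ∀ v w, DD v (DD w (DD (ev i) Q)) p = DD w (DD v (DD (ev i) Q)) p :=
    fun i v w => DD_symm ((hQ.dd (ev i)).smooth p hp) v w
  -- B i = S i + 2 ∑ j r j A i j
  have hB : ∀ i, B i = (∑ j, T j i) + 2 * ∑ j, r j * A i j := by
    intro i
    have h1 : B i = DD (ev i) (DD (e0 n) Q) p := hQsymm (e0 n) (ev i)
    rw [h1, DR0_eq hQ hheat hp (ev i)]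
    congr 1
    · apply Finset.sum_congr rfl
      intro j _
      -- DDᵢ(DDⱼ(DDⱼQ)) p = T j i
      have s1 : DD (ev i) (DD (ev j) (DD (ev j) Q)) p
          = DD (ev j) (DD (ev i) (DD (ev j) Q)) p := DD_symm ((hQ.dd (ev j)).smooth p hp) _ _
      have s2 : DD (ev j) (DD (ev i) (DD (ev j) Q)) p
          = DD (ev j) (DD (ev j) (DD (ev i) Q)) p := by
        apply DD_congr isOpen_Uo (fun q hq => DD_symm (hQ.smooth q hq) (ev i) (ev j)) hp
      rw [s1, s2]
    · rw [Finset.mul_sum]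
      apply Finset.sum_congr rfl
      intro j _
      show 2 * r j * DD (ev i) (DD (ev j) Q) p = 2 * (r j * A i j)
      rw [hA]; ring
  -- D_j W
  have hDjW : ∀ j, DD (ev j) (Wf Q) p = (∑ i, r i * A j i) - B j := by
    intro j
    rw [DW_eq hQ hp (ev j)]
    congr 1
    exact (hQsymm (ev j) (e0 n))
  -- D_j D_j W
  have hDjjW : ∀ j, DD (ev j) (DD (ev j) (Wf Q)) p
      = (∑ i, (A j i * A j i + r i * T j i)) - C j := by
    intro j
    rw [DDW_eq hQ hp (ev j) (ev j)]
    congr 1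
    -- DDⱼ(DDⱼ(DD e0 Q)) p = C j
    have s1 : DD (ev j) (DD (ev j) (DD (e0 n) Q)) p
        = DD (ev j) (DD (e0 n) (DD (ev j) Q)) p := by
      apply DD_congr isOpen_Uo (fun q hq => DD_symm (hQ.smooth q hq) (ev j) (e0 n)) hp
    have s2 : DD (ev j) (DD (e0 n) (DD (ev j) Q)) p
        = DD (e0 n) (DD (ev j) (DD (ev j) Q)) p := hRsymm j (ev j) (e0 n)
    rw [s1, s2]
  -- D_0 W
  have hD0W : DD (e0 n) (Wf Q) p = (∑ i, r i * B i) - ((∑ i, C i) + ∑ i, 2 * r i * B i) := by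
    rw [DW_eq hQ hp (e0 n), DR0_eq hQ hheat hp (e0 n)]
  -- abbreviations
  set X1 : ℝ := ∑ i, r i * ∑ j, T j i with hX1
  set X2 : ℝ := ∑ i, r i * ∑ j, r j * A i j with hX2
  set X4 : ℝ := ∑ i, ∑ j, (A i j)^2 with hX4
  have hrB : ∑ i, r i * B i = X1 + 2 * X2 := by
    calc ∑ i, r i * B i = ∑ i, (r i * ∑ j, T j i + 2 * (r i * ∑ j, r j * A i j)) :=
          Finset.sum_congr rfl fun i _ => by rw [hB i]; ring
    _ = X1 + 2 * X2 := by
        rw [Finset.sum_add_distrib, ← Finset.mul_sum]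
  have h2rB : ∑ i, 2 * r i * B i = 2 * (X1 + 2 * X2) := by
    calc ∑ i, 2 * r i * B i = 2 * ∑ i, r i * B i := by
          rw [Finset.mul_sum]; exact Finset.sum_congr rfl fun i _ => by ring
    _ = 2 * (X1 + 2 * X2) := by rw [hrB]
  have hsum1 : ∑ j, ((∑ i, (A j i * A j i + r i * T j i)) - C j)
      = (X4 + X1) - ∑ i, C i := by
    have inner : ∀ j, (∑ i, (A j i * A j i + r i * T j i))
        = (∑ i, A j i * A j i) + ∑ i, r i * T j i := fun j => Finset.sum_add_distrib
    rw [Finset.sum_sub_distrib]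
    congr 1
    rw [Finset.sum_congr rfl fun j _ => inner j, Finset.sum_add_distrib]
    congr 1
    · calc ∑ j, ∑ i, A j i * A j i = ∑ j, ∑ i, (A j i)^2 :=
            Finset.sum_congr rfl fun j _ => Finset.sum_congr rfl fun i _ => (sq _).symm
        _ = X4 := rfl
    · calc ∑ j, ∑ i, r i * T j i = ∑ i, ∑ j, r i * T j i := Finset.sum_comm
        _ = ∑ i, r i * ∑ j, T j i :=
            Finset.sum_congr rfl fun i _ => (Finset.mul_sum _ _ _).symm
        _ = X1 := rfl
  have hsum2 : ∑ j, r j * ((∑ i, r i * A j i) - B j) = X2 - (X1 + 2 * X2) := by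
    have e : ∀ j : Fin n, r j * ((∑ i, r i * A j i) - B j)
        = r j * (∑ i, r i * A j i) - r j * B j := fun j => by ring
    rw [Finset.sum_congr rfl fun j _ => e j, Finset.sum_sub_distrib]
    have e2 : ∑ j, r j * ∑ i, r i * A j i = X2 := rfl
    rw [e2, hrB]
  have c1 : DD (e0 n) (Wf Q) p = (X1 + 2*X2) - ((∑ i, C i) + 2*(X1 + 2*X2)) := by
    rw [hD0W, hrB, h2rB]
  have c2 : ∑ j, DD (ev j) (DD (ev j) (Wf Q)) p = (X4 + X1) - ∑ i, C i := by
    rw [Finset.sum_congr rfl fun j _ => hDjjW j]; exact hsum1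
  have c3 : ∑ j, DD (ev j) Q p * DD (ev j) (Wf Q) p = X2 - (X1 + 2*X2) := by
    have e : ∀ j : Fin n, DD (ev j) Q p * DD (ev j) (Wf Q) p
        = r j * ((∑ i, r i * A j i) - B j) := fun j => by rw [hDjW j]
    rw [Finset.sum_congr rfl fun j _ => e j]; exact hsum2
  rw [c1, c2, c3]
  ring
end core2

section liyau
variable {n : ℕ} {Q : ℝ × (Fin n → ℝ) → ℝ}

lemma hasDerivAt_line {g : ℝ × (Fin n → ℝ) → ℝ} {q v : ℝ × (Fin n → ℝ)} {s₀ : ℝ}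
    (hg : DifferentiableAt ℝ g (q + s₀ • v)) :
    HasDerivAt (fun s : ℝ => g (q + s • v)) (DD v g (q + s₀ • v)) s₀ := by
  have hline : HasDerivAt (fun s : ℝ => q + s • v) v s₀ := by
    simpa using ((hasDerivAt_id s₀).smul_const v).const_add q
  have := hg.hasFDerivAt.comp_hasDerivAt s₀ hline
  simpa [DD, Function.comp_def] using this

set_option maxHeartbeats 1000000 in
lemma liYau (hn : 1 ≤ n) (hQ : Good n Q) (hheat : HeatQ n Q)
    {a : ℝ} (ha : 0 < a) :
    ∀ p : ℝ × (Fin n → ℝ), a < p.1 → (p.1 - a) * Wf Q p ≤ n := by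
  intro p hap
  set T := p.1 with hT
  have haT : a < T := hap
  set G : ℝ × (Fin n → ℝ) → ℝ := fun q => (q.1 - a) * Wf Q q with hG
  set K : Set (ℝ × (Fin n → ℝ)) := Set.Icc ((a : ℝ), (0 : Fin n → ℝ)) (T, 1) with hK
  have hKsub : K ⊆ Uo n := by
    intro q hq
    rw [mem_Uo]
    have := hq.1.1
    simp only [] at this
    linarith [hq.1.1]
  have hKc : IsCompact K := isCompact_Icc
  have hKne : K.Nonempty := by
    refine ⟨((a : ℝ), (0 : Fin n → ℝ)), ?_⟩
    apply Set.left_mem_Icc.mpr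
    constructor
    · exact le_of_lt haT
    · intro i; norm_num
  have hWcont : ∀ q ∈ Uo n, ContinuousAt (Wf Q) q :=
    fun q hq => ((hQ.wf).smooth q hq).continuousAt
  have hGcont : ContinuousOn G K := by
    intro q hq
    apply ContinuousAt.continuousWithinAt
    exact (continuousAt_fst.sub continuousAt_const).mul (hWcont q (hKsub hq))
  obtain ⟨p₀, hp₀K, hmaxK⟩ := hKc.exists_isMaxOn hKne hGcont
  -- global bound from periodicity
  have hglob : ∀ q : ℝ × (Fin n → ℝ), a ≤ q.1 → q.1 ≤ T → G q ≤ G p₀ := by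
    intro q hq1 hq2
    have hqU : q ∈ Uo n := mem_Uo.mpr (by linarith)
    set y : Fin n → ℝ := fun i => Int.fract (q.2 i) with hy
    set m : Fin n → ℤ := fun i => ⌊q.2 i⌋ with hm
    have hyq : (q.1, y) + ((0 : ℝ), fun i => (m i : ℝ)) = q := by
      have h2 : (y + fun i => (m i : ℝ)) = q.2 := by
        funext i
        show Int.fract (q.2 i) + (⌊q.2 i⌋ : ℝ) = q.2 i
        exact Int.fract_add_floor (q.2 i)
      show (q.1 + 0, y + fun i => (m i : ℝ)) = q
      rw [add_zero, h2]
    have hyU : (q.1, y) ∈ Uo n := mem_Uo.mpr (mem_Uo.mp hqU)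
    have hWper : Wf Q q = Wf Q (q.1, y) := by
      conv_lhs => rw [← hyq]
      exact (hQ.wf).per (q.1, y) hyU m
    have hyK : ((q.1 : ℝ), y) ∈ K := by
      constructor
      · exact ⟨hq1, by intro i; exact Int.fract_nonneg _⟩
      · exact ⟨hq2, by intro i; exact le_of_lt (Int.fract_lt_one _)⟩
    have : G q = G (q.1, y) := by simp only [hG, hWper]
    rw [this]
    exact hmaxK hyK
  -- main claim : G p₀ ≤ n
  have hmain : G p₀ ≤ n := by
    by_cases hG0 : G p₀ ≤ 0
    · have : (1:ℝ) ≤ n := by exact_mod_cast hn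
      linarith
    push_neg at hG0
    have hp₀T : p₀.1 ≤ T := hp₀K.2.1
    have hp₀a : a ≤ p₀.1 := hp₀K.1.1
    have hτpos : 0 < p₀.1 - a := by
      have hβ : 0 < (p₀.1 - a) * Wf Q p₀ := hG0
      rcases lt_or_eq_of_le hp₀a with h | h
      · linarith
      · exfalso; rw [← h] at hβ; simp at hβ
    set t₀ := p₀.1 with ht₀
    set τ := t₀ - a with hτ
    set w₀ := Wf Q p₀ with hw₀
    have hw₀pos : 0 < w₀ := by
      by_contra hw
      push_neg at hw
      have : G p₀ = τ * w₀ := rfl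
      nlinarith
    have hp₀U : p₀ ∈ Uo n := mem_Uo.mpr (by linarith)
    -- time direction
    have htime : 0 ≤ w₀ + τ * DD (e0 n) (Wf Q) p₀ := by
      have hq0 : ((0:ℝ), p₀.2) + t₀ • e0 n = p₀ := by
        ext <;> simp [e0, ht₀]
      have hρ : HasDerivAt (fun s : ℝ => Wf Q (((0:ℝ), p₀.2) + s • e0 n))
          (DD (e0 n) (Wf Q) p₀) t₀ := by
        have := hasDerivAt_line (g := Wf Q) (q := ((0:ℝ), p₀.2)) (v := e0 n) (s₀ := t₀)
          (by rw [hq0]; exact (hQ.wf).diffAt hp₀U)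
        rwa [hq0] at this
      have hψ : HasDerivAt (fun s : ℝ => (s - a) * Wf Q (((0:ℝ), p₀.2) + s • e0 n))
          (1 * Wf Q (((0:ℝ), p₀.2) + t₀ • e0 n) + (t₀ - a) * DD (e0 n) (Wf Q) p₀) t₀ := by
        exact ((hasDerivAt_id t₀).sub_const a).mul hρ
      rw [hq0] at hψ
      have hmaxt : ∀ s ∈ Set.Icc a t₀,
          (fun s : ℝ => (s - a) * Wf Q (((0:ℝ), p₀.2) + s • e0 n)) s
          ≤ (fun s : ℝ => (s - a) * Wf Q (((0:ℝ), p₀.2) + s • e0 n)) t₀ := by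
        intro s hs
        simp only []
        rw [hq0]
        have hline : ((0:ℝ), p₀.2) + s • e0 n = ((s:ℝ), p₀.2) := by ext <;> simp [e0]
        rw [hline]
        have := hglob ((s:ℝ), p₀.2) (by simpa using hs.1) (by simp; linarith [hs.2, hp₀T])
        exact this
      have := deriv_nonneg_of_isMaxOn_right hψ hmaxt (by linarith)
      calc (0:ℝ) ≤ 1 * Wf Q p₀ + (t₀ - a) * DD (e0 n) (Wf Q) p₀ := this
        _ = w₀ + τ * DD (e0 n) (Wf Q) p₀ := by ring
    -- space directions
    have hspace : ∀ j : Fin n, DD (ev j) (Wf Q) p₀ = 0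
        ∧ DD (ev j) (DD (ev j) (Wf Q)) p₀ ≤ 0 := by
      intro j
      have hlineU : ∀ s : ℝ, p₀ + s • ev j ∈ Uo n := by
        intro s
        rw [mem_Uo]
        simp [ev]
        linarith
      have h1 : ∀ s : ℝ, HasDerivAt (fun s : ℝ => Wf Q (p₀ + s • ev j))
          (DD (ev j) (Wf Q) (p₀ + s • ev j)) s :=
        fun s => hasDerivAt_line ((hQ.wf).diffAt (hlineU s))
      have h2 : ∀ s : ℝ, HasDerivAt (fun s : ℝ => DD (ev j) (Wf Q) (p₀ + s • ev j))
          (DD (ev j) (DD (ev j) (Wf Q)) (p₀ + s • ev j)) s :=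
        fun s => hasDerivAt_line (((hQ.wf).dd (ev j)).diffAt (hlineU s))
      have hc : ContinuousAt (fun s : ℝ => DD (ev j) (DD (ev j) (Wf Q)) (p₀ + s • ev j)) 0 := by
        have hcont0 : ContinuousAt (DD (ev j) (DD (ev j) (Wf Q))) (p₀ + (0:ℝ) • ev j) := by
          have h0 : p₀ + (0:ℝ) • ev j = p₀ := by simp
          rw [h0]
          exact ((((hQ.wf).dd (ev j)).dd (ev j)).smooth p₀ hp₀U).continuousAt
        have hinner : ContinuousAt (fun s : ℝ => p₀ + s • ev j) 0 := by fun_prop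
        have hrfl : (fun s : ℝ => DD (ev j) (DD (ev j) (Wf Q)) (p₀ + s • ev j))
            = (DD (ev j) (DD (ev j) (Wf Q))) ∘ (fun s : ℝ => p₀ + s • ev j) := rfl
        rw [hrfl]
        exact ContinuousAt.comp hcont0 hinner
      have hmaxs : ∀ s : ℝ, (fun s : ℝ => Wf Q (p₀ + s • ev j)) s
          ≤ (fun s : ℝ => Wf Q (p₀ + s • ev j)) 0 := by
        intro s
        simp only []
        have h0 : p₀ + (0:ℝ) • ev j = p₀ := by simp
        rw [h0]
        have hfirst : (p₀ + s • ev j).1 = t₀ := by simp [ev, ht₀]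
        have := hglob (p₀ + s • ev j) (by rw [hfirst]; linarith) (by rw [hfirst]; exact hp₀T)
        have hGle : (t₀ - a) * Wf Q (p₀ + s • ev j) ≤ (t₀ - a) * Wf Q p₀ := by
          have e1 : G (p₀ + s • ev j) = (t₀ - a) * Wf Q (p₀ + s • ev j) := by
            simp only [hG, hfirst]
          have e2 : G p₀ = (t₀ - a) * Wf Q p₀ := rfl
          rw [← e1, ← e2]; exact this
        exact le_of_mul_le_mul_left hGle hτpos
      have := second_deriv_test h1 h2 hc hmaxs
      have h0 : p₀ + (0:ℝ) • ev j = p₀ := by simp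
      rw [h0] at this
      exact this
    -- star identity and Cauchy-Schwarz
    have hstar := star_identity hQ hheat hp₀U
    set S : ℝ := ∑ i, ∑ j, (DD (ev i) (DD (ev j) Q) p₀) ^ 2 with hS
    have hDjW0 : ∑ j, DD (ev j) Q p₀ * DD (ev j) (Wf Q) p₀ = 0 := by
      apply Finset.sum_eq_zero
      intro j _
      rw [(hspace j).1, mul_zero]
    have hΔW : ∑ j, DD (ev j) (DD (ev j) (Wf Q)) p₀ ≤ 0 :=
      Finset.sum_nonpos fun j _ => (hspace j).2
    have hD0W : DD (e0 n) (Wf Q) p₀ ≤ -S := by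
      have := hstar
      rw [hDjW0] at this
      nlinarith [hΔW]
    -- S ≥ w₀^2 / n
    have htrace : ∑ i, DD (ev i) (DD (ev i) Q) p₀ = -w₀ - (1/2) * ∑ i, (DD (ev i) Q p₀)^2 := by
      have hh := hheat p₀ hp₀U
      have : w₀ = (1/2) * ∑ i, (DD (ev i) Q p₀)^2 - DD (e0 n) Q p₀ := rfl
      rw [this]
      linarith [hh]
    have hCS : (∑ i, DD (ev i) (DD (ev i) Q) p₀)^2 ≤ (n : ℝ) * S := by
      have h1 : (∑ i, DD (ev i) (DD (ev i) Q) p₀)^2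
          ≤ (Finset.univ : Finset (Fin n)).card * ∑ i, (DD (ev i) (DD (ev i) Q) p₀)^2 :=
        sq_sum_le_card_mul_sum_sq
      have h2 : ∑ i, (DD (ev i) (DD (ev i) Q) p₀)^2 ≤ S := by
        apply Finset.sum_le_sum
        intro i _
        exact Finset.single_le_sum (f := fun j => (DD (ev i) (DD (ev j) Q) p₀)^2)
          (fun j _ => sq_nonneg _) (Finset.mem_univ i)
      calc (∑ i, DD (ev i) (DD (ev i) Q) p₀)^2
          ≤ (Finset.univ : Finset (Fin n)).card * ∑ i, (DD (ev i) (DD (ev i) Q) p₀)^2 := h1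
        _ ≤ (n : ℝ) * S := by
            rw [Finset.card_univ, Fintype.card_fin]
            exact mul_le_mul_of_nonneg_left h2 (by positivity)
    have hw₀S : w₀^2 ≤ (n:ℝ) * S := by
      have hsq : w₀^2 ≤ (∑ i, DD (ev i) (DD (ev i) Q) p₀)^2 := by
        rw [htrace]
        have hnn : 0 ≤ ∑ i, (DD (ev i) Q p₀)^2 := Finset.sum_nonneg fun i _ => sq_nonneg _
        nlinarith
      linarith
    -- combine
    have hGval : G p₀ = τ * w₀ := rfl
    clear_value S w₀ τ
    have hnpos : (0:ℝ) < n := by exact_mod_cast Nat.lt_of_lt_of_le Nat.zero_lt_one hn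
    have hfinal : τ * w₀ ≤ n := by
      have h1 : 0 ≤ w₀ - τ * S := by nlinarith [htime, hD0W, hτpos]
      have k1 : τ * w₀^2 ≤ (n:ℝ) * (τ * S) := by nlinarith [hτpos.le, hw₀S]
      have k2 : (n:ℝ) * (τ * S) ≤ (n:ℝ) * w₀ := by nlinarith [hnpos.le, h1]
      have k3 : τ * w₀^2 ≤ (n:ℝ) * w₀ := le_trans k1 k2
      nlinarith [k3, hw₀pos]
    calc G p₀ = τ * w₀ := hGval
      _ ≤ n := hfinal
  have := hglob p (le_of_lt hap) le_rfl
  calc (p.1 - a) * Wf Q p = G p := rfl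
    _ ≤ G p₀ := this
    _ ≤ n := hmain
end liyau

section translate
variable {n : ℕ}

lemma curry_pd {g : ℝ × (Fin n → ℝ) → ℝ} {t : ℝ} {x : Fin n → ℝ}
    (hg : DifferentiableAt ℝ g (t, x)) (i : Fin n) :
    pd i (fun x' => g (t, x')) x = DD (ev i) g (t, x) := by
  have hinner : HasFDerivAt (fun x' : Fin n → ℝ => ((t : ℝ), x'))
      (ContinuousLinearMap.inr ℝ ℝ (Fin n → ℝ)) x :=
    (hasFDerivAt_const t x).prodMk (hasFDerivAt_id x)
  have hcomp := hg.hasFDerivAt.comp x hinner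
  simp only [pd, DD, ev]
  rw [show (fun x' => g (t, x')) = g ∘ Prod.mk t from rfl, hcomp.fderiv]
  simp

lemma curry_deriv {g : ℝ × (Fin n → ℝ) → ℝ} {t : ℝ} {x : Fin n → ℝ}
    (hg : DifferentiableAt ℝ g (t, x)) :
    HasDerivAt (fun s => g (s, x)) (DD (e0 n) g (t, x)) t := by
  have hinner : HasDerivAt (fun s : ℝ => ((s : ℝ), x)) ((1 : ℝ), (0 : Fin n → ℝ)) t :=
    (hasDerivAt_id t).prodMk (hasDerivAt_const t x)
  have := hg.hasFDerivAt.comp_hasDerivAt t hinner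
  simpa [DD, e0, Function.comp_def] using this

end translate

end infra

/-- Theorem 2.3: integrated Harnack inequality
`f(x₁,t₁) ≤ f(x₂,t₂) (t₂/t₁)ⁿ e^{Γ/2}` along any C¹ space-time path. -/
theorem integrated_harnack
    (n : ℕ) (hn : 1 ≤ n) (f : ℝ → (Fin n → ℝ) → ℝ)
    (hsmooth : ContDiffOn ℝ (⊤ : ℕ∞) (fun p : ℝ × (Fin n → ℝ) => f p.1 p.2)
      (Set.Ioi 0 ×ˢ Set.univ))
    (hpos : ∀ t > (0:ℝ), ∀ x : Fin n → ℝ, 0 < f t x)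
    (hheat : ∀ t > (0:ℝ), ∀ x : Fin n → ℝ, deriv (fun s => f s x) t = lap (f t) x)
    (hper : ∀ t > (0:ℝ), ∀ x : Fin n → ℝ, ∀ m : Fin n → ℤ,
      f t (x + fun i => (m i : ℝ)) = f t x)
    (t₁ t₂ : ℝ) (ht₁ : 0 < t₁) (ht₁₂ : t₁ < t₂)
    (x₁ x₂ : Fin n → ℝ) (γ γ' : ℝ → Fin n → ℝ)
    (hγ : ∀ t ∈ Set.Icc t₁ t₂, HasDerivAt γ (γ' t) t)
    (hγ' : ContinuousOn γ' (Set.Icc t₁ t₂))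
    (hstart : γ t₁ = x₁) (hend : γ t₂ = x₂) :
    f t₁ x₁ ≤ f t₂ x₂ * (t₂ / t₁) ^ n *
      Real.exp ((1 / 2) * ∫ t in t₁..t₂, ∑ i, (γ' t i) ^ 2) := by
  classical
  set F : ℝ × (Fin n → ℝ) → ℝ := fun p => f p.1 p.2 with hF
  set Q : ℝ × (Fin n → ℝ) → ℝ := fun p => Real.log (F p) with hQdef
  have hFpos : ∀ p ∈ Uo n, 0 < F p := fun p hp => hpos p.1 (mem_Uo.mp hp) p.2
  have hFgood : Good n F := by
    constructor
    · intro p hp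
      exact hsmooth.contDiffAt (isOpen_Uo.mem_nhds hp)
    · intro p hp m
      show f (p.1 + 0) (p.2 + fun i => (m i : ℝ)) = f p.1 p.2
      rw [add_zero]
      exact hper p.1 (mem_Uo.mp hp) p.2 m
  have hQgood : Good n Q := by
    constructor
    · intro p hp
      exact (hFgood.smooth p hp).log (ne_of_gt (hFpos p hp))
    · intro p hp m
      show Real.log (F _) = Real.log (F p)
      rw [hFgood.per p hp m]
  -- heat equation for F
  have hFheat : ∀ p ∈ Uo n, DD (e0 n) F p = ∑ i, DD (ev i) (DD (ev i) F) p := by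
    rintro ⟨t, x⟩ hp
    have ht : (0:ℝ) < t := mem_Uo.mp hp
    have h1 : deriv (fun s => f s x) t = DD (e0 n) F (t, x) :=
      (curry_deriv (hFgood.diffAt hp)).deriv
    have h2 : lap (f t) x = ∑ i, DD (ev i) (DD (ev i) F) (t, x) := by
      apply Finset.sum_congr rfl
      intro i _
      have ha : pd i (f t) = fun x' => DD (ev i) F (t, x') := by
        funext x'
        exact curry_pd (hFgood.diffAt (mem_Uo.mpr ht)) i
      rw [ha]
      exact curry_pd ((hFgood.dd (ev i)).diffAt (mem_Uo.mpr ht)) i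
    rw [← h1, ← h2]
    exact hheat t ht x
  -- first and second derivative relations for Q
  have hrel1 : ∀ p ∈ Uo n, ∀ v, DD v Q p = DD v F p / F p :=
    fun p hp v => DD_log (hFgood.diffAt hp) (ne_of_gt (hFpos p hp)) v
  have hrel2 : ∀ p ∈ Uo n, ∀ v, DD v (DD v Q) p
      = DD v (DD v F) p / F p - (DD v F p)^2 / (F p)^2 := by
    intro p hp v
    have hcongr : DD v (DD v Q) p = DD v (fun q => DD v F q / F q) p :=
      DD_congr isOpen_Uo (fun q hq => hrel1 q hq v) hp v
    rw [hcongr, DD_div ((hFgood.dd v).diffAt hp) (hFgood.diffAt hp) (ne_of_gt (hFpos p hp)) v]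
    have hne : F p ≠ 0 := ne_of_gt (hFpos p hp)
    field_simp
  have hQheat : HeatQ n Q := by
    intro p hp
    have hFne : F p ≠ 0 := ne_of_gt (hFpos p hp)
    have e1 : ∑ i, DD (ev i) (DD (ev i) Q) p
        = ∑ i, (DD (ev i) (DD (ev i) F) p / F p - (DD (ev i) F p)^2 / (F p)^2) :=
      Finset.sum_congr rfl fun i _ => hrel2 p hp (ev i)
    have e2 : ∑ i, (DD (ev i) Q p)^2 = ∑ i, (DD (ev i) F p)^2 / (F p)^2 :=
      Finset.sum_congr rfl fun i _ => by rw [hrel1 p hp (ev i), div_pow]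
    rw [hrel1 p hp (e0 n), hFheat p hp, e1, e2, Finset.sum_sub_distrib, Finset.sum_div]
    ring
  -- abbreviations
  set Γ : ℝ := ∫ t in t₁..t₂, ∑ i, (γ' t i)^2 with hΓ
  set Cst : ℝ := Real.exp ((1/2) * Γ) with hCst
  show f t₁ x₁ ≤ f t₂ x₂ * (t₂ / t₁) ^ n * Cst
  suffices hkey : ∀ a ∈ Set.Ioo (0:ℝ) t₁, f t₁ x₁ ≤ f t₂ x₂ * ((t₂ - a)/(t₁ - a))^n * Cst by
    have hlim : Filter.Tendsto (fun a : ℝ => f t₂ x₂ * ((t₂ - a)/(t₁ - a))^n * Cst)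
        (nhdsWithin 0 (Set.Ioi 0)) (nhds (f t₂ x₂ * (t₂/t₁)^n * Cst)) := by
      have h1 : ContinuousAt (fun a : ℝ => (t₂ - a)/(t₁ - a)) 0 :=
        ContinuousAt.div ((continuous_const.sub continuous_id).continuousAt)
          ((continuous_const.sub continuous_id).continuousAt)
          (by simpa using ne_of_gt ht₁)
      have hc : ContinuousAt (fun a : ℝ => f t₂ x₂ * ((t₂ - a)/(t₁ - a))^n * Cst) 0 :=
        (continuousAt_const.mul (h1.pow n)).mul continuousAt_const
      have := hc.tendsto
      simp only [sub_zero] at this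
      exact this.mono_left nhdsWithin_le_nhds
    refine ge_of_tendsto hlim ?_
    filter_upwards [Ioo_mem_nhdsGT_of_mem (Set.left_mem_Ico.mpr ht₁)] with a ha
    exact hkey a ha
  rintro a ⟨ha0, hat₁⟩
  -- Li–Yau estimate
  have hLY : ∀ t : ℝ, ∀ x : Fin n → ℝ, a < t → Wf Q (t, x) ≤ (n:ℝ) / (t - a) := by
    intro t x hta
    have h := liYau hn hQgood hQheat ha0 (t, x) hta
    rw [le_div_iff₀ (by show (0:ℝ) < t - a; linarith)]
    calc Wf Q (t, x) * (t - a) = ((t, x).1 - a) * Wf Q (t, x) := by ring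
      _ ≤ n := h
  -- the path function
  set φ : ℝ → ℝ := fun t => Q (t, γ t) with hφ
  set ψ : ℝ → ℝ := fun t => DD (e0 n) Q (t, γ t) + ∑ i, γ' t i * DD (ev i) Q (t, γ t) with hψ
  have hmemU : ∀ t ∈ Set.Icc t₁ t₂, ((t : ℝ), γ t) ∈ Uo n :=
    fun t ht => mem_Uo.mpr (by show (0:ℝ) < t; linarith [ht.1])
  have hφderiv : ∀ t ∈ Set.Icc t₁ t₂, HasDerivAt φ (ψ t) t := by
    intro t ht
    have hcurve : HasDerivAt (fun s : ℝ => ((s : ℝ), γ s)) ((1 : ℝ), γ' t) t :=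
      (hasDerivAt_id t).prodMk (hγ t ht)
    have hQd := (hQgood.diffAt (hmemU t ht)).hasFDerivAt
    have hcomp := hQd.comp_hasDerivAt t hcurve
    have hval : (fderiv ℝ Q ((t : ℝ), γ t)) ((1 : ℝ), γ' t) = ψ t := by
      have hsplit : ((1:ℝ), γ' t) = e0 n + ∑ i, γ' t i • ev i := by
        have hfst : (∑ i, γ' t i • ev i).1 = 0 := by
          rw [Prod.fst_sum]
          simp [ev]
        have hsnd : (∑ i, γ' t i • ev i).2 = γ' t := by
          rw [Prod.snd_sum]
          funext j
          simp only [ev, Prod.smul_mk, smul_zero]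
          rw [Finset.sum_apply]
          simp [Pi.single_apply, Finset.sum_ite_eq']
        have : e0 n + ∑ i, γ' t i • ev i
            = (1 + (∑ i, γ' t i • ev i).1, (0 : Fin n → ℝ) + (∑ i, γ' t i • ev i).2) := rfl
        rw [this, hfst, hsnd, add_zero, zero_add]
      rw [hsplit, map_add, map_sum]
      congr 1
      apply Finset.sum_congr rfl
      intro i _
      rw [_root_.map_smul]
      rfl
    rw [← hval]
    exact hcomp
  -- lower bound for ψ
  have hψlow : ∀ t ∈ Set.Icc t₁ t₂,
      -((n:ℝ)/(t - a)) - (1/2) * ∑ i, (γ' t i)^2 ≤ ψ t := by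
    intro t ht
    have hW := hLY t (γ t) (by linarith [ht.1])
    have hQ0 : DD (e0 n) Q (t, γ t)
        = (1/2) * ∑ i, (DD (ev i) Q (t, γ t))^2 - Wf Q (t, γ t) := by
      have h : Wf Q (t, γ t)
          = (1/2) * ∑ i, (DD (ev i) Q (t, γ t))^2 - DD (e0 n) Q (t, γ t) := rfl
      linarith
    have hcross : -((1/2) * ∑ i, (γ' t i)^2) - (1/2) * ∑ i, (DD (ev i) Q (t, γ t))^2
        ≤ ∑ i, γ' t i * DD (ev i) Q (t, γ t) := by
      have hterm : ∀ i : Fin n, -((1/2) * (γ' t i)^2 + (1/2) * (DD (ev i) Q (t, γ t))^2)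
          ≤ γ' t i * DD (ev i) Q (t, γ t) := by
        intro i
        nlinarith [sq_nonneg (γ' t i + DD (ev i) Q (t, γ t))]
      calc -((1/2) * ∑ i, (γ' t i)^2) - (1/2) * ∑ i, (DD (ev i) Q (t, γ t))^2
          = ∑ i, (-((1/2) * (γ' t i)^2 + (1/2) * (DD (ev i) Q (t, γ t))^2)) := by
            rw [Finset.sum_neg_distrib, Finset.sum_add_distrib, ← Finset.mul_sum, ← Finset.mul_sum]
            ring
        _ ≤ ∑ i, γ' t i * DD (ev i) Q (t, γ t) := Finset.sum_le_sum fun i _ => hterm i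
    have : ψ t = DD (e0 n) Q (t, γ t) + ∑ i, γ' t i * DD (ev i) Q (t, γ t) := rfl
    rw [this, hQ0]
    linarith
  -- continuity facts
  have hγcont : ContinuousOn γ (Set.Icc t₁ t₂) :=
    fun t ht => (hγ t ht).continuousAt.continuousWithinAt
  have hcurvecont : ContinuousOn (fun t : ℝ => ((t : ℝ), γ t)) (Set.Icc t₁ t₂) :=
    continuousOn_id.prodMk hγcont
  have hψcont : ContinuousOn ψ (Set.Icc t₁ t₂) := by
    apply ContinuousOn.add
    · intro t ht
      have h1 : ContinuousWithinAt ((DD (e0 n) Q) ∘ fun s : ℝ => ((s : ℝ), γ s))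
          (Set.Icc t₁ t₂) t :=
        ContinuousAt.comp_continuousWithinAt (f := fun s : ℝ => ((s : ℝ), γ s)) (x := t)
          (((hQgood.dd (e0 n)).smooth _ (hmemU t ht)).continuousAt) (hcurvecont t ht)
      exact h1
    · apply continuousOn_finset_sum
      intro i _
      apply ContinuousOn.mul
      · exact (continuous_apply i).comp_continuousOn hγ'
      · intro t ht
        have h1 : ContinuousWithinAt ((DD (ev i) Q) ∘ fun s : ℝ => ((s : ℝ), γ s))
            (Set.Icc t₁ t₂) t :=
          ContinuousAt.comp_continuousWithinAt (f := fun s : ℝ => ((s : ℝ), γ s)) (x := t)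
            (((hQgood.dd (ev i)).smooth _ (hmemU t ht)).continuousAt) (hcurvecont t ht)
        exact h1
  have hubIcc : Set.uIcc t₁ t₂ = Set.Icc t₁ t₂ := Set.uIcc_of_le (le_of_lt ht₁₂)
  have hψint : IntervalIntegrable ψ MeasureTheory.volume t₁ t₂ := by
    apply ContinuousOn.intervalIntegrable
    rwa [hubIcc]
  have hg1cont : ContinuousOn (fun t : ℝ => -((n:ℝ)/(t - a))) (Set.Icc t₁ t₂) := by
    apply ContinuousOn.neg
    apply ContinuousOn.div continuousOn_const
      ((continuous_id.sub continuous_const).continuousOn)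
    intro t ht
    have : a < t := by linarith [ht.1]
    simp only [Pi.sub_apply, id]
    intro hzero
    linarith [sub_pos.mpr this, hzero.symm.le]
  have hg2cont : ContinuousOn (fun t : ℝ => (1/2 : ℝ) * ∑ i, (γ' t i)^2) (Set.Icc t₁ t₂) := by
    apply ContinuousOn.mul continuousOn_const
    apply continuousOn_finset_sum
    intro i _
    exact ((continuous_apply i).comp_continuousOn hγ').pow 2
  have hg1int : IntervalIntegrable (fun t : ℝ => -((n:ℝ)/(t - a)))
      MeasureTheory.volume t₁ t₂ := by
    apply ContinuousOn.intervalIntegrable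
    rwa [hubIcc]
  have hg2int : IntervalIntegrable (fun t : ℝ => (1/2 : ℝ) * ∑ i, (γ' t i)^2)
      MeasureTheory.volume t₁ t₂ := by
    apply ContinuousOn.intervalIntegrable
    rwa [hubIcc]
  have hgint : IntervalIntegrable
      (fun t : ℝ => -((n:ℝ)/(t - a)) - (1/2) * ∑ i, (γ' t i)^2)
      MeasureTheory.volume t₁ t₂ := hg1int.sub hg2int
  -- FTC and comparison
  have hFTC : ∫ t in t₁..t₂, ψ t = φ t₂ - φ t₁ :=
    intervalIntegral.integral_eq_sub_of_hasDerivAt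
      (fun t ht => hφderiv t (by rwa [hubIcc] at ht)) hψint
  have hmono : (∫ t in t₁..t₂, (-((n:ℝ)/(t - a)) - (1/2) * ∑ i, (γ' t i)^2))
      ≤ ∫ t in t₁..t₂, ψ t :=
    intervalIntegral.integral_mono_on (le_of_lt ht₁₂) hgint hψint (fun t ht => hψlow t ht)
  have hsplitint : (∫ t in t₁..t₂, (-((n:ℝ)/(t - a)) - (1/2) * ∑ i, (γ' t i)^2))
      = (∫ t in t₁..t₂, -((n:ℝ)/(t - a))) - ∫ t in t₁..t₂, (1/2 : ℝ) * ∑ i, (γ' t i)^2 :=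
    intervalIntegral.integral_sub hg1int hg2int
  have hint1 : (∫ t in t₁..t₂, -((n:ℝ)/(t - a)))
      = -((n:ℝ) * Real.log ((t₂ - a)/(t₁ - a))) := by
    have hrw : (fun t : ℝ => -((n:ℝ)/(t - a))) = fun t : ℝ => -((n:ℝ) * (t - a)⁻¹) := by
      funext t
      rw [div_eq_mul_inv]
    rw [hrw, intervalIntegral.integral_neg, intervalIntegral.integral_const_mul]
    have hshift : (∫ t in t₁..t₂, (t - a)⁻¹) = ∫ u in (t₁ - a)..(t₂ - a), u⁻¹ :=
      intervalIntegral.integral_comp_sub_right (fun u => u⁻¹) a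
    rw [hshift, integral_inv_of_pos (by linarith) (by linarith)]
  have hint2 : (∫ t in t₁..t₂, (1/2 : ℝ) * ∑ i, (γ' t i)^2) = (1/2) * Γ := by
    rw [hΓ, intervalIntegral.integral_const_mul]
  -- log inequality
  have hφ1 : φ t₁ = Real.log (f t₁ x₁) := by
    show Real.log (f t₁ (γ t₁)) = Real.log (f t₁ x₁)
    rw [hstart]
  have hφ2 : φ t₂ = Real.log (f t₂ x₂) := by
    show Real.log (f t₂ (γ t₂)) = Real.log (f t₂ x₂)
    rw [hend]
  have hlogineq : Real.log (f t₁ x₁)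
      ≤ Real.log (f t₂ x₂) + (n:ℝ) * Real.log ((t₂ - a)/(t₁ - a)) + (1/2) * Γ := by
    have h := hmono
    rw [hsplitint, hint1, hint2, hFTC, hφ1, hφ2] at h
    linarith
  -- exponentiate
  have hr : (0:ℝ) < (t₂ - a)/(t₁ - a) := div_pos (by linarith) (by linarith)
  have hexp := Real.exp_le_exp.mpr hlogineq
  rw [Real.exp_log (hpos t₁ ht₁ x₁), Real.exp_add, Real.exp_add,
    Real.exp_log (hpos t₂ (by linarith) x₂)] at hexp
  have hexp2 : Real.exp ((n:ℝ) * Real.log ((t₂ - a)/(t₁ - a))) = ((t₂ - a)/(t₁ - a))^n := by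
    rw [← Real.log_pow, Real.exp_log (pow_pos hr n)]
  rw [hexp2] at hexp
  calc f t₁ x₁ ≤ f t₂ x₂ * ((t₂ - a)/(t₁ - a))^n * Real.exp ((1/2) * Γ) := hexp
    _ = f t₂ x₂ * ((t₂ - a)/(t₁ - a))^n * Cst := by rw [hCst]
end
end
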